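/- arXiv:1007.1191 — 5 statements merged into one kernel-verified Lean document; each statement's English description precedes it below -/
import Mathlib

section
/- For every ideal I ⊆ ℝ[x₁,…,xₙ] there exists a function Ψ : ℕ → ℕ such that TH_{Ψ(k)}(I) ⊆ TH_k(√ᴿI) for all k ∈ ℕ. -/
open MvPolynomial

/-- A polynomial `h` is `k`-sos mod a set `I` of polynomials if
`h - ∑ gᵢ² ∈ I` for some polynomials `gᵢ` of degree at most `k`. -/
def IsKSos {σ : Type*} (I : Set (MvPolynomial σ ℝ)) (k : ℕ) (h : MvPolynomial σ ℝ) : Prop :=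
  ∃ (r : ℕ) (g : Fin r → MvPolynomial σ ℝ),
    (∀ i, (g i).totalDegree ≤ k) ∧ h - ∑ i, g i ^ 2 ∈ I

/-- The `k`-th theta body of `I`: the points where every linear polynomial that is
`k`-sos mod `I` is nonnegative. -/
def thetaBody {σ : Type*} (I : Set (MvPolynomial σ ℝ)) (k : ℕ) : Set (σ → ℝ) :=
  {p | ∀ l : MvPolynomial σ ℝ, l.totalDegree ≤ 1 → IsKSos I k l → 0 ≤ eval p l}

/-- The real variety of a set of polynomials. -/
def realVariety {σ : Type*} (I : Set (MvPolynomial σ ℝ)) : Set (σ → ℝ) :=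
  {x | ∀ f ∈ I, eval x f = 0}

/-- The real radical of a set of polynomials:
all `f` with `f^(2m) + ∑ gᵢ² ∈ I` for some `m` and some `gᵢ`. -/
def realRadical {σ : Type*} (I : Set (MvPolynomial σ ℝ)) : Set (MvPolynomial σ ℝ) :=
  {f | ∃ (m r : ℕ) (g : Fin r → MvPolynomial σ ℝ), f ^ (2 * m) + ∑ i, g i ^ 2 ∈ I}

variable {n : ℕ} (I : Ideal (MvPolynomial (Fin n) ℝ))

lemma IsKSos.mono {σ : Type*} {I : Set (MvPolynomial σ ℝ)} {k k' : ℕ} (hk : k ≤ k')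
    {h : MvPolynomial σ ℝ} (H : IsKSos I k h) : IsKSos I k' h := by
  obtain ⟨r, g, hd, hm⟩ := H
  exact ⟨r, g, fun i => (hd i).trans hk, hm⟩

lemma IsKSos.add {k : ℕ} {a b : MvPolynomial (Fin n) ℝ}
    (ha : IsKSos (I : Set _) k a) (hb : IsKSos (I : Set _) k b) :
    IsKSos (I : Set _) k (a + b) := by
  obtain ⟨r, g, hd, hm⟩ := ha
  obtain ⟨r', g', hd', hm'⟩ := hb
  refine ⟨r + r', Fin.append g g', ?_, ?_⟩
  · intro i
    induction i using Fin.addCases with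
    | left i => rw [Fin.append_left]; exact hd i
    | right i => rw [Fin.append_right]; exact hd' i
  · rw [Fin.sum_univ_add]
    simp only [Fin.append_left, Fin.append_right]
    have : a + b - ((∑ i : Fin r, g i ^ 2) + ∑ i : Fin r', g' i ^ 2)
        = (a - ∑ i, g i ^ 2) + (b - ∑ i, g' i ^ 2) := by ring
    rw [this]
    exact I.add_mem hm hm'

lemma IsKSos.sum {k : ℕ} {α : Type*} (s : Finset α) (f : α → MvPolynomial (Fin n) ℝ)
    (h : ∀ a ∈ s, IsKSos (I : Set _) k (f a)) :
    IsKSos (I : Set _) k (∑ a ∈ s, f a) := by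
  classical
  induction s using Finset.induction_on with
  | empty => exact ⟨0, ![], by simp, by simp⟩
  | @insert a s hx ih =>
    rw [Finset.sum_insert hx]
    exact (h _ (Finset.mem_insert_self _ _)).add I (ih fun a ha => h a (Finset.mem_insert_of_mem ha))

lemma sq_ident {R : Type*} [CommRing R] (A B f : R) (h : 2*A*B = 1) :
    (A + B*f)^2 = A^2 + f + B^2 * f^2 := by linear_combination f * h

lemma sq_ident' {R : Type*} [CommRing R] (A B c g : R) (h : 2*A*B = c) :
    (A - B*g)^2 = A^2 - c*g + B^2 * g^2 := by linear_combination (-g) * h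

lemma degC_mul_le (a : ℝ) (f : MvPolynomial (Fin n) ℝ) :
    (C a * f).totalDegree ≤ f.totalDegree :=
  (totalDegree_mul _ _).trans (le_of_eq (by rw [totalDegree_C, zero_add]))

lemma C_mul_C_eq (a b c : ℝ) (h : 2*a*b = c) :
    (2 : MvPolynomial (Fin n) ℝ) * C a * C b = C c := by
  rw [show (2 : MvPolynomial (Fin n) ℝ) = C 2 from (map_ofNat (C : ℝ →+* MvPolynomial (Fin n) ℝ) 2).symm, ← C_mul, ← C_mul, h]

/-- Main induction: `ε + f + λ f^(2^(s+1))` is a sum of squares of degree `≤ 2^(s+1) deg f`,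
with `λ > 0` depending on `ε` but the degree bound not. -/
lemma main_ind (s : ℕ) (f : MvPolynomial (Fin n) ℝ) (ε : ℝ) (hε : 0 < ε) :
    ∃ lam : ℝ, 0 < lam ∧ ∃ (r : ℕ) (q : Fin r → MvPolynomial (Fin n) ℝ),
      (∀ i, (q i).totalDegree ≤ 2^(s+1) * f.totalDegree) ∧
      (∑ i, q i ^ 2) = C ε + f + C lam * f ^ (2^(s+1)) := by
  induction s generalizing ε with
  | zero =>
    have hs : Real.sqrt ε ≠ 0 := ne_of_gt (Real.sqrt_pos.2 hε)
    refine ⟨1/(4*ε), by positivity, 1, ![C (Real.sqrt ε) + C (1/(2*Real.sqrt ε)) * f], ?_, ?_⟩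
    · intro i
      fin_cases i
      show (C (Real.sqrt ε) + C (1/(2*Real.sqrt ε)) * f).totalDegree ≤ _
      refine (totalDegree_add _ _).trans ?_
      rw [totalDegree_C]
      refine (max_le (Nat.zero_le _) (degC_mul_le _ _)).trans ?_
      exact Nat.le_mul_of_pos_left _ (by norm_num)
    · rw [Fin.sum_univ_one]
      show (C (Real.sqrt ε) + C (1/(2*Real.sqrt ε)) * f)^2 = _
      have hAB : (2 : MvPolynomial (Fin n) ℝ) * C (Real.sqrt ε) * C (1/(2*Real.sqrt ε)) = 1 := by
        rw [C_mul_C_eq _ _ 1 (by field_simp)]; simp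
      rw [sq_ident _ _ _ hAB, ← C_pow, ← C_pow, Real.sq_sqrt hε.le,
        show (1/(2*Real.sqrt ε))^2 = 1/(4*ε) by
          rw [div_pow, mul_pow, Real.sq_sqrt hε.le]; norm_num]
      norm_num
  | succ s ih =>
    obtain ⟨lam, hlam, r, q, hdeg, hsum⟩ := ih (ε/2) (by positivity)
    set E := 2^(s+1) with hE
    have hε2 : (0:ℝ) < ε/2 := by positivity
    have hs : Real.sqrt (ε/2) ≠ 0 := ne_of_gt (Real.sqrt_pos.2 hε2)
    set t : MvPolynomial (Fin n) ℝ := C (Real.sqrt (ε/2)) - C (lam/(2*Real.sqrt (ε/2))) * f^E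
      with ht
    have hEE : E * f.totalDegree ≤ 2^(s+1+1) * f.totalDegree :=
      Nat.mul_le_mul_right _ (Nat.pow_le_pow_right (by norm_num) (by omega))
    refine ⟨lam^2/(2*ε), by positivity, r + 1, Fin.snoc q t, ?_, ?_⟩
    · intro i
      induction i using Fin.lastCases with
      | last =>
        rw [Fin.snoc_last, ht, sub_eq_add_neg]
        refine ((totalDegree_add _ _).trans ?_)
        rw [totalDegree_C, totalDegree_neg]
        refine (max_le (Nat.zero_le _) ((degC_mul_le _ _).trans (totalDegree_pow _ _))).trans hEE
      | cast i =>
        rw [Fin.snoc_castSucc]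
        exact (hdeg i).trans hEE
    · rw [Fin.sum_univ_castSucc]
      simp only [Fin.snoc_castSucc, Fin.snoc_last]
      rw [hsum]
      have hAB : (2 : MvPolynomial (Fin n) ℝ) * C (Real.sqrt (ε/2)) * C (lam/(2*Real.sqrt (ε/2)))
          = C lam := C_mul_C_eq _ _ _ (by field_simp)
      have hA : (C (Real.sqrt (ε/2)) : MvPolynomial (Fin n) ℝ)^2 = C (ε/2) := by
        rw [← C_pow, Real.sq_sqrt hε2.le]
      have hB : (C (lam/(2*Real.sqrt (ε/2))) : MvPolynomial (Fin n) ℝ)^2 = C (lam^2/(2*ε)) := by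
        rw [← C_pow]
        congr 1
        rw [div_pow, mul_pow, Real.sq_sqrt hε2.le]
        ring
      have hpow : ((f^E)^2 : MvPolynomial (Fin n) ℝ) = f^(2^(s+1+1)) := by
        rw [← pow_mul]
        congr 1
      have hC2 : (C (ε/2) : MvPolynomial (Fin n) ℝ) + C (ε/2) = C ε := by
        rw [← C_add, add_halves]
      rw [ht, sq_ident' _ _ _ _ hAB, hA, hB, hpow, ← hC2]
      ring

/-- If `f^(2m) + σ ∈ I` with `m ≥ 1` and `σ` an explicit sum of squares, then there is a
degree bound `N` such that `δ + c·f` is `N`-sos mod `I` for every `c` and every `δ > 0`. -/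
lemma lemmaA (f : MvPolynomial (Fin n) ℝ) (m r₀ : ℕ)
    (s₀ : Fin r₀ → MvPolynomial (Fin n) ℝ)
    (hI : f^(2*m) + ∑ i, s₀ i ^ 2 ∈ I) :
    ∃ N : ℕ, ∀ (c δ : ℝ), 0 < δ → IsKSos (I : Set _) N (C δ + C c * f) := by
  classical
  set B₀ := Finset.univ.sup (fun i => (s₀ i).totalDegree) with hB₀
  have hmle : m ≤ 2^m := Nat.le_of_lt (Nat.lt_two_pow_self)
  have h2E : 2^(m+1) = 2*2^m := by rw [pow_succ]; ring
  set u := 2^m - m with hu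
  set E := 2^(m+1) with hE
  have hEeq : E = 2*u + 2*m := by omega
  refine ⟨max (E * f.totalDegree) (u * f.totalDegree + B₀), ?_⟩
  intro c δ hδ
  obtain ⟨lam, hlam, r, q, hdeg, hsum⟩ := main_ind m (C c * f) δ hδ
  set w : Fin r₀ → MvPolynomial (Fin n) ℝ :=
    fun i => C (Real.sqrt lam * c^(2^m)) * (f^u * s₀ i) with hw
  refine ⟨r + r₀, Fin.append q w, ?_, ?_⟩
  · intro i
    induction i using Fin.addCases with
    | left i =>
      rw [Fin.append_left]
      refine le_max_of_le_left ((hdeg i).trans ?_)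
      exact Nat.mul_le_mul_left _ (degC_mul_le _ _)
    | right i =>
      rw [Fin.append_right, hw]
      refine le_max_of_le_right ?_
      refine (degC_mul_le _ _).trans ((totalDegree_mul _ _).trans ?_)
      exact Nat.add_le_add ((totalDegree_pow _ _)) (Finset.le_sup (f := fun i => (s₀ i).totalDegree) (Finset.mem_univ i))
  · rw [Fin.sum_univ_add]
    simp only [Fin.append_left, Fin.append_right]
    have hcE : ((c^(2^m):ℝ))^2 = c^E := by rw [← pow_mul, hE, pow_succ]
    have hw2 : ∀ i, (w i)^2 = C lam * C (c^E) * (f^(2*u) * s₀ i ^2) := by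
      intro i
      rw [hw]
      simp only
      rw [mul_pow, mul_pow, ← C_pow, mul_pow, Real.sq_sqrt hlam.le, hcE, C_mul, ← pow_mul]
      ring
    have hsw : ∑ i, (w i)^2 = C lam * C (c^E) * f^(2*u) * ∑ i, s₀ i ^2 := by
      rw [Finset.mul_sum]
      exact Finset.sum_congr rfl fun i _ => by rw [hw2 i]; ring
    have hpe : (C c * f : MvPolynomial (Fin n) ℝ)^E = C (c^E) * (f^(2*u) * f^(2*m)) := by
      rw [mul_pow, C_pow, ← pow_add, ← hEeq]
    have key : C δ + C c * f - ((∑ i, q i ^2) + ∑ i, (w i)^2)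
        = -(C lam * C (c^E) * f^(2*u)) * (f^(2*m) + ∑ i, s₀ i ^2) := by
      rw [hsum, hsw, hpe]
      ring
    rw [key]
    exact I.mul_mem_left _ hI

lemma IsKSos.single {k : ℕ} (x : MvPolynomial (Fin n) ℝ) (hx : x.totalDegree ≤ k) :
    IsKSos (I : Set _) k (x^2) :=
  ⟨1, ![x], by intro i; fin_cases i; exact hx, by rw [Fin.sum_univ_one]; simp⟩

lemma key_step (k : ℕ) : ∃ M : ℕ, ∀ (p : Fin n → ℝ) ,
    (∀ l : MvPolynomial (Fin n) ℝ, l.totalDegree ≤ 1 → IsKSos (I : Set _) M l → 0 ≤ eval p l) →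
    ∀ l : MvPolynomial (Fin n) ℝ, l.totalDegree ≤ 1 →
      IsKSos (realRadical (I : Set _)) k l → 0 ≤ eval p l := by
  classical
  set d := 2*k+1 with hd
  set H : Set (MvPolynomial (Fin n) ℝ) :=
    {h | h ∈ realRadical (I : Set _) ∧ h.totalDegree ≤ d} with hH
  set T := restrictTotalDegree (Fin n) ℝ d with hT
  have hHT : H ⊆ (T : Set _) := fun h hh => (mem_restrictTotalDegree _ _ _).2 hh.2
  set W : Submodule ℝ (MvPolynomial (Fin n) ℝ) := Submodule.span ℝ H with hW
  have hWT : W ≤ T := Submodule.span_le.2 hHT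
  have hWfg : W.FG := by
    have : IsNoetherian ℝ T := isNoetherian_of_isNoetherianRing_of_finite ℝ T
    have h1 : (W.comap T.subtype).FG := IsNoetherian.noetherian _
    have h2 : Submodule.map T.subtype (W.comap T.subtype) = W := by
      rw [Submodule.map_comap_subtype, inf_eq_right.2 hWT]
    rw [← h2]
    exact Submodule.FG.map _ h1
  obtain ⟨S, hS⟩ := hWfg
  have hSmem : ∀ g ∈ S, ∃ t : Finset (MvPolynomial (Fin n) ℝ),
      ↑t ⊆ H ∧ (g : MvPolynomial (Fin n) ℝ) ∈ Submodule.span ℝ (t : Set _) := by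
    intro g hg
    have : g ∈ W := by rw [← hS]; exact Submodule.subset_span hg
    obtain ⟨t, ht1, ht2⟩ := Submodule.mem_span_finite_of_mem_span this
    exact ⟨t, ht1, ht2⟩
  choose! t ht1 ht2 using hSmem
  set F : Finset (MvPolynomial (Fin n) ℝ) := S.biUnion t with hF
  have hFH : (F : Set _) ⊆ H := by
    intro x hx
    simp only [hF, Finset.coe_biUnion, Set.mem_iUnion, Finset.mem_coe] at hx
    obtain ⟨g, hg, hxg⟩ := hx
    exact ht1 g hg hxg
  have hHF : H ⊆ (Submodule.span ℝ (F : Set (MvPolynomial (Fin n) ℝ)) : Set (MvPolynomial (Fin n) ℝ)) := by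
    intro x hx
    have hxW : x ∈ W := Submodule.subset_span hx
    rw [← hS] at hxW
    refine Submodule.span_le.2 ?_ hxW
    intro g hg
    refine Submodule.span_le.2 ?_ (ht2 g hg)
    intro y hy
    exact Submodule.subset_span (by
      simp only [hF, Finset.coe_biUnion, Set.mem_iUnion, Finset.mem_coe]
      exact ⟨g, hg, hy⟩)
  -- per-element degree bounds from lemmaA
  have hFA : ∀ f ∈ F, ∃ N : ℕ, ∀ (c δ : ℝ), 0 < δ → IsKSos (I : Set _) N (C δ + C c * f) := by
    intro f hf
    obtain ⟨m, r₀, s₀, hmem⟩ := (hFH (Finset.mem_coe.2 hf)).1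
    exact lemmaA I f m r₀ s₀ hmem
  choose! N hN using hFA
  refine ⟨max k (F.sup N), ?_⟩
  intro p hp l hl hsos
  obtain ⟨r, g, hdg, hmem⟩ := hsos
  set h := l - ∑ i, g i ^ 2 with hh
  have hhH : h ∈ H := by
    refine ⟨hmem, ?_⟩
    rw [hh]
    refine (totalDegree_sub _ _).trans (max_le (hl.trans (by omega)) ?_)
    refine (totalDegree_finset_sum _ _).trans ?_
    refine (Finset.sup_le fun i _ => ?_ : _ ≤ 2*k).trans (by omega)
    exact (totalDegree_pow _ _).trans (by have := hdg i; omega)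
  obtain ⟨co, -, hco⟩ := Submodule.mem_span_finset.1 (hHF hhH)
  have main : ∀ ε : ℝ, 0 < ε → 0 ≤ eval p l + ε := by
    intro ε hε
    have part1 : IsKSos (I : Set _) (max k (F.sup N)) (∑ i, g i ^ 2) :=
      ⟨r, g, fun i => (hdg i).trans (le_max_left _ _), by rw [sub_self]; exact I.zero_mem⟩
    have part2 : IsKSos (I : Set _) (max k (F.sup N)) (h + C ε) := by
      rcases Finset.eq_empty_or_nonempty F with hFe | hFe
      · have hh0 : h = 0 := by
          have := hHF hhH
          rw [hFe] at this
          simpa using this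
        have : h + C ε = (C (Real.sqrt ε))^2 := by
          rw [hh0, zero_add, ← C_pow, Real.sq_sqrt hε.le]
        rw [this]
        exact IsKSos.single I _ (by simp [totalDegree_C])
      · have hcard : (0:ℝ) < F.card := by
          exact_mod_cast Finset.card_pos.2 hFe
        have hs1 : (F.card) • (C (ε/F.card) : MvPolynomial (Fin n) ℝ) = C ε := by
          rw [nsmul_eq_mul, show ((F.card : MvPolynomial (Fin n) ℝ)) = C (F.card : ℝ) by
              simp, ← C_mul]
          rw [mul_div_cancel₀ _ (ne_of_gt hcard)]
        have hs2 : ∑ f ∈ F, C (co f) * f = h := by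
          rw [← hco]
          exact Finset.sum_congr rfl fun f _ => (smul_eq_C_mul _ _).symm
        have e2 : h + C ε = ∑ f ∈ F, (C (ε/F.card) + C (co f) * f) := by
          rw [Finset.sum_add_distrib, Finset.sum_const, hs1, hs2, add_comm]
        rw [e2]
        refine IsKSos.sum I F _ fun f hf => ?_
        refine (hN f hf (co f) (ε/F.card) (by positivity)).mono ?_
        exact le_max_of_le_right (Finset.le_sup hf)
      -- note: order of C ε and h
    have e1 : l + C ε = (∑ i, g i ^ 2) + (h + C ε) := by rw [hh]; ring
    have hsos2 : IsKSos (I : Set _) (max k (F.sup N)) (l + C ε) := by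
      rw [e1]; exact part1.add I part2
    have hdegl : (l + C ε : MvPolynomial (Fin n) ℝ).totalDegree ≤ 1 :=
      (totalDegree_add _ _).trans (max_le hl (by simp [totalDegree_C]))
    have := hp (l + C ε) hdegl hsos2
    rw [map_add, eval_C] at this
    linarith
  by_contra hneg
  push_neg at hneg
  have := main (-(eval p l)/2) (by linarith)
  linarith

/-- For every ideal `I ⊆ ℝ[x₁,…,xₙ]` there is `Ψ : ℕ → ℕ` with
`TH_{Ψ(k)}(I) ⊆ TH_k(√ᴿI)` for all `k`. -/
theorem exists_thetaBody_subset_thetaBody_realRadical {n : ℕ}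
    (I : Ideal (MvPolynomial (Fin n) ℝ)) :
    ∃ Ψ : ℕ → ℕ, ∀ k : ℕ,
      thetaBody (I : Set (MvPolynomial (Fin n) ℝ)) (Ψ k) ⊆
        thetaBody (realRadical (I : Set (MvPolynomial (Fin n) ℝ))) k := by
  have H : ∀ k : ℕ, ∃ M : ℕ, thetaBody (I : Set (MvPolynomial (Fin n) ℝ)) M ⊆
      thetaBody (realRadical (I : Set (MvPolynomial (Fin n) ℝ))) k := by
    intro k
    obtain ⟨M, hM⟩ := key_step I k
    exact ⟨M, fun p hp => hM p hp⟩
  choose Ψ hΨ using H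
  exact ⟨Ψ, hΨ⟩
end

section
/- Let G = ([n], E) be a finite simple graph and let C ⊆ [n] be the vertex set of an odd cycle in G with |C| = 2k+1. Then the odd cycle inequality Σ_{i∈C} xᵢ ≤ k is valid on TH₂(I_G); equivalently, the linear polynomial k − Σ_{i∈C} xᵢ is 2-sos mod I_G and hence nonnegative at every point of TH₂(I_G). -/
open MvPolynomial

/-- The stable set ideal `I_G = ⟨xᵢ² - xᵢ (i ∈ [n]), xᵢxⱼ ({i,j} ∈ E)⟩` of a graph `G`. -/
noncomputable def stableIdeal {n : ℕ} (G : SimpleGraph (Fin n)) : Ideal (MvPolynomial (Fin n) ℝ) :=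
  Ideal.span ((Set.range fun i : Fin n => X i ^ 2 - X i) ∪
    {p | ∃ i j : Fin n, G.Adj i j ∧ p = X i * X j})


private lemma sum_pairs_odd {Q : Type*} [AddCommGroup Q] (f : ℕ → Q) :
    ∀ M : ℕ, ∑ j ∈ Finset.range M, (f (2*j+1) + f (2*j+2))
      = (∑ i ∈ Finset.range (2*M+1), f i) - f 0
  | 0 => by simp
  | (M+1) => by
    have hr : ∑ i ∈ Finset.range (2*(M+1)+1), f i
        = (∑ i ∈ Finset.range (2*M+1), f i) + f (2*M+1) + f (2*M+2) := by
      rw [show 2*(M+1)+1 = (2*M+1)+1+1 by ring, Finset.sum_range_succ,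
        Finset.sum_range_succ, show 2*M+1+1 = 2*M+2 by ring]
    rw [Finset.sum_range_succ, sum_pairs_odd f M, hr]
    abel

private lemma sum_pairs_even {Q : Type*} [AddCommGroup Q] (f : ℕ → Q) :
    ∀ M : ℕ, ∑ j ∈ Finset.range M, (f (2*j+2) + f (2*j+3))
      = (∑ i ∈ Finset.range (2*M+2), f i) - f 0 - f 1
  | 0 => by
    simp [Finset.sum_range_succ]
  | (M+1) => by
    have hr : ∑ i ∈ Finset.range (2*(M+1)+2), f i
        = (∑ i ∈ Finset.range (2*M+2), f i) + f (2*M+2) + f (2*M+3) := by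
      rw [show 2*(M+1)+2 = (2*M+2)+1+1 by ring, Finset.sum_range_succ,
        Finset.sum_range_succ, show 2*M+2+1 = 2*M+3 by ring]
    rw [Finset.sum_range_succ, sum_pairs_even f M, hr]
    abel

private lemma sq_of_idem {Q : Type*} [CommRing Q] {b p q : Q}
    (hb : b * b = b) (hp : p * p = p) (hq : q * q = q) (hpq : p * q = 0) :
    (b * (1 - p - q))^2 = b * (1 - p - q) := by
  linear_combination (1 - p - q)^2 * hb + b * hp + b * hq + 2 * b * hpq

private lemma key_identity {Q : Type*} [CommRing Q] (m : ℕ) (y : ℕ → Q)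
    (hidem : ∀ i, y i * y i = y i)
    (hadj : ∀ i, i < 2*m+2 → y i * y (i+1) = 0)
    (hlast : y 0 * y (2*m+2) = 0) :
    ((m : Q) + 1) - ∑ i ∈ Finset.range (2*m+3), y i
      = (∑ j ∈ Finset.range (m+1), ((1 - y 0) * (1 - y (2*j+1) - y (2*j+2)))^2)
        + ∑ j ∈ Finset.range m, (y 0 * (1 - y (2*j+2) - y (2*j+3)))^2 := by
  have hb : (1 - y 0) * (1 - y 0) = 1 - y 0 := by linear_combination hidem 0
  have e1 : ∀ j ∈ Finset.range (m+1),
      ((1 - y 0) * (1 - y (2*j+1) - y (2*j+2)))^2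
        = (1 - y 0) * (1 - y (2*j+1) - y (2*j+2)) := by
    intro j hj
    have hcons : y (2*j+1) * y (2*j+2) = 0 := by
      have := hadj (2*j+1) (by simp only [Finset.mem_range] at hj; omega)
      rwa [show 2*j+1+1 = 2*j+2 by ring] at this
    exact sq_of_idem hb (hidem _) (hidem _) hcons
  have e2 : ∀ j ∈ Finset.range m,
      (y 0 * (1 - y (2*j+2) - y (2*j+3)))^2
        = y 0 * (1 - y (2*j+2) - y (2*j+3)) := by
    intro j hj
    have hcons : y (2*j+2) * y (2*j+3) = 0 := by
      have := hadj (2*j+2) (by simp only [Finset.mem_range] at hj; omega)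
      rwa [show 2*j+2+1 = 2*j+3 by ring] at this
    exact sq_of_idem (hidem 0) (hidem _) (hidem _) hcons
  rw [Finset.sum_congr rfl e1, Finset.sum_congr rfl e2, ← Finset.mul_sum, ← Finset.mul_sum]
  have hA : ∑ j ∈ Finset.range (m+1), (1 - y (2*j+1) - y (2*j+2))
      = ((m:Q)+1) - ((∑ i ∈ Finset.range (2*m+3), y i) - y 0) := by
    have h := sum_pairs_odd y (m+1)
    rw [show 2*(m+1)+1 = 2*m+3 by ring] at h
    calc ∑ j ∈ Finset.range (m+1), (1 - y (2*j+1) - y (2*j+2))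
        = ∑ j ∈ Finset.range (m+1), ((1:Q) - (y (2*j+1) + y (2*j+2))) :=
          Finset.sum_congr rfl fun j _ => by ring
      _ = (∑ _j ∈ Finset.range (m+1), (1:Q))
            - ∑ j ∈ Finset.range (m+1), (y (2*j+1) + y (2*j+2)) := Finset.sum_sub_distrib _ _
      _ = _ := by
          rw [h, Finset.sum_const, Finset.card_range, nsmul_eq_mul, mul_one]
          push_cast
          ring
  have hB : ∑ j ∈ Finset.range m, (1 - y (2*j+2) - y (2*j+3))
      = (m:Q) - ((∑ i ∈ Finset.range (2*m+2), y i) - y 0 - y 1) := by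
    have h := sum_pairs_even y m
    calc ∑ j ∈ Finset.range m, (1 - y (2*j+2) - y (2*j+3))
        = ∑ j ∈ Finset.range m, ((1:Q) - (y (2*j+2) + y (2*j+3))) :=
          Finset.sum_congr rfl fun j _ => by ring
      _ = (∑ _j ∈ Finset.range m, (1:Q))
            - ∑ j ∈ Finset.range m, (y (2*j+2) + y (2*j+3)) := Finset.sum_sub_distrib _ _
      _ = _ := by
          rw [h, Finset.sum_const, Finset.card_range, nsmul_eq_mul, mul_one]
  have hS : ∑ i ∈ Finset.range (2*m+3), y i
      = (∑ i ∈ Finset.range (2*m+2), y i) + y (2*m+2) := by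
    rw [show 2*m+3 = (2*m+2)+1 by ring, Finset.sum_range_succ]
  have h01 : y 0 * y 1 = 0 := by
    have := hadj 0 (by omega)
    simpa using this
  rw [hA, hB, hS]
  linear_combination (-1 : Q) * h01 - hlast

private lemma list_map_sum_eq {α M : Type*} [AddCommMonoid M] (f : α → M) (d : α) :
    ∀ l : List α, (l.map f).sum = ∑ i ∈ Finset.range l.length, f (l.getD i d)
  | [] => by simp
  | a :: l => by
    rw [List.map_cons, List.sum_cons, list_map_sum_eq f d l, List.length_cons,
      Finset.sum_range_succ']
    simp [add_comm]

private lemma getD_last {α : Type*} (l : List α) (d : α) (h : l ≠ []) :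
    l.getD (l.length - 1) d = l.getLast h := by
  have hpos : 0 < l.length := List.length_pos_iff.mpr h
  rw [List.getD_eq_getElem _ _ (by omega), List.getLast_eq_getElem]

/-- If `s` is the vertex set of an odd cycle in `G` with `|s| = 2k+1`, then
`k - ∑_{i ∈ s} xᵢ` is `2`-sos mod `I_G`, and hence the odd cycle inequality
`∑_{i ∈ s} xᵢ ≤ k` is valid on `TH₂(I_G)`. -/
theorem odd_cycle_inequality_valid {n k : ℕ} (G : SimpleGraph (Fin n)) (s : Finset (Fin n))
    (hcard : s.card = 2 * k + 1)
    (hcyc : ∃ (u : Fin n) (w : G.Walk u u), w.IsCycle ∧ ∀ v : Fin n, v ∈ w.support ↔ v ∈ s) :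
    IsKSos ((stableIdeal G : Ideal (MvPolynomial (Fin n) ℝ)) : Set (MvPolynomial (Fin n) ℝ)) 2
        (C (k : ℝ) - ∑ i ∈ s, X i) ∧
      ∀ p ∈ thetaBody
          ((stableIdeal G : Ideal (MvPolynomial (Fin n) ℝ)) : Set (MvPolynomial (Fin n) ℝ)) 2,
        ∑ i ∈ s, p i ≤ (k : ℝ) := by
    classical
  have hsos : IsKSos ((stableIdeal G : Ideal (MvPolynomial (Fin n) ℝ)) :
      Set (MvPolynomial (Fin n) ℝ)) 2 (C (k : ℝ) - ∑ i ∈ s, X i) := by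
    obtain ⟨u, w, hw, hsupp⟩ := hcyc
    -- basic facts about the support list
    have hLne : w.support ≠ [] := w.support_ne_nil
    have hchain : List.Chain' G.Adj w.support := w.isChain_adj_support
    have hlastL : w.support.getLast hLne = u := w.getLast_support
    have hLcons : w.support = u :: w.support.tail := w.support_eq_cons
    have htail : w.support.tail.Nodup := hw.support_nodup
    have hlen3 : 3 ≤ w.length := hw.three_le_length
    have hlensup : w.support.length = w.length + 1 := w.length_support
    have httlen : w.support.tail.length = w.length := by
      rw [List.length_tail, hlensup]
      omega
    have ht_ne : w.support.tail ≠ [] := List.ne_nil_of_length_pos (by omega)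
    -- the list without the repeated endpoint
    have hgl : w.support.tail.getLast ht_ne = u := by
      rw [List.getLast_tail]
      exact hlastL
    have htd : (w.support.tail.dropLast ++ [u]).Nodup := by
      have h2 := htail
      rw [← List.dropLast_append_getLast ht_ne] at h2
      rwa [hgl] at h2
    have hu_not : u ∉ w.support.tail.dropLast := by
      have := List.disjoint_of_nodup_append htd
      intro hmem
      exact this hmem (by simp)
    have hdlnodup : w.support.tail.dropLast.Nodup := (List.nodup_append.mp htd).1
    obtain ⟨b, t', ht'⟩ := List.exists_cons_of_ne_nil ht_ne
    have hldef : w.support.dropLast = u :: w.support.tail.dropLast := by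
      rw [hLcons, ht']
      rfl
    have hlnodup : w.support.dropLast.Nodup := by
      rw [hldef]
      exact List.nodup_cons.mpr ⟨hu_not, hdlnodup⟩
    have humem : u ∈ w.support.dropLast := by rw [hldef]; exact List.mem_cons_self
    have hmem : ∀ x, x ∈ w.support.dropLast ↔ x ∈ s := by
      intro x
      rw [← hsupp x]
      constructor
      · intro hx
        rw [← List.dropLast_append_getLast hLne]
        exact List.mem_append_left _ hx
      · intro hx
        rw [← List.dropLast_append_getLast hLne] at hx
        rcases List.mem_append.mp hx with h | h
        · exact h
        · simp only [List.mem_singleton] at h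
          rw [h, hlastL]
          exact humem
    have hfin : w.support.dropLast.toFinset = s :=
      Finset.ext fun x => by rw [List.mem_toFinset]; exact hmem x
    have hllen : w.support.dropLast.length = 2 * k + 1 := by
      rw [← List.toFinset_card_of_nodup hlnodup, hfin, hcard]
    have hLlen : w.support.length = 2 * k + 1 + 1 := by
      have h1 := List.length_dropLast (xs := w.support)
      have h2 : 0 < w.support.length := List.length_pos_iff.mpr hLne
      omega
    -- k = m + 1
    obtain ⟨m, rfl⟩ : ∃ m, k = m + 1 := ⟨k - 1, by omega⟩
    -- the vertex labeling
    set v : ℕ → Fin n := fun i => w.support.getD i u with hv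
    have hv0 : v 0 = u := by rw [hv, hLcons]; rfl
    have hvN : v (2*m+3) = u := by
      show w.support.getD (2*m+3) u = u
      rw [show 2*m+3 = w.support.length - 1 by omega, getD_last _ _ hLne, hlastL]
    have hadjv : ∀ i, i < 2*m+3 → G.Adj (v i) (v (i+1)) := by
      intro i hi
      have hilen : i < w.support.length - 1 := by omega
      have h := List.isChain_iff_getElem.mp hchain i (by omega)
      have e1 : v i = w.support.get ⟨i, by omega⟩ := List.getD_eq_get _ _ ⟨i, by omega⟩
      have e2 : v (i+1) = w.support.get ⟨i+1, by omega⟩ := List.getD_eq_get _ _ ⟨i+1, by omega⟩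
      rw [e1, e2]
      exact h
    -- sum over s
    have hsum : (∑ i ∈ s, (X i : MvPolynomial (Fin n) ℝ))
        = ∑ i ∈ Finset.range (2*m+3), X (v i) := by
      rw [← hfin, List.sum_toFinset _ hlnodup, list_map_sum_eq X u w.support.dropLast]
      rw [show w.support.dropLast.length = 2*m+3 by omega]
      refine Finset.sum_congr rfl fun i hi => ?_
      have hi' : i < w.support.dropLast.length := by
        simp only [Finset.mem_range] at hi; omega
      congr 1
      show w.support.dropLast.getD i u = w.support.getD i u
      rw [List.getD_eq_getElem _ _ hi', List.getD_eq_getElem _ _ (by omega : i < w.support.length)]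
      exact List.getElem_dropLast ..
    -- quotient ring facts
    have hXidem : ∀ a : Fin n,
        Ideal.Quotient.mk (stableIdeal G) (X a) * Ideal.Quotient.mk (stableIdeal G) (X a)
          = Ideal.Quotient.mk (stableIdeal G) (X a) := by
      intro a
      rw [← map_mul, Ideal.Quotient.eq]
      exact Ideal.subset_span (Set.mem_union_left _ ⟨a, by ring⟩)
    have hXadj : ∀ a b : Fin n, G.Adj a b →
        Ideal.Quotient.mk (stableIdeal G) (X a) * Ideal.Quotient.mk (stableIdeal G) (X b) = 0 := by
      intro a b hab
      rw [← map_mul, Ideal.Quotient.eq_zero_iff_mem]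
      exact Ideal.subset_span (Set.mem_union_right _ ⟨a, b, hab, rfl⟩)
    set y : ℕ → MvPolynomial (Fin n) ℝ ⧸ stableIdeal G :=
      fun i => Ideal.Quotient.mk (stableIdeal G) (X (v i)) with hy
    have hyadj : ∀ i, i < 2*m+2 → y i * y (i+1) = 0 := fun i hi =>
      hXadj _ _ (hadjv i (by omega))
    have hylast : y 0 * y (2*m+2) = 0 := by
      have h := hadjv (2*m+2) (by omega)
      rw [show 2*m+2+1 = 2*m+3 by ring, hvN] at h
      have h' : G.Adj (v 0) (v (2*m+2)) := by rw [hv0]; exact h.symm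
      exact hXadj _ _ h'
    have hkey := key_identity m y (fun i => hXidem (v i)) hyadj hylast
    -- the certificate
    refine ⟨(m+1) + m,
      Fin.addCases
        (fun j => (1 - X (v 0)) * (1 - X (v (2*j.val+1)) - X (v (2*j.val+2))))
        (fun j => X (v 0) * (1 - X (v (2*j.val+2)) - X (v (2*j.val+3)))), ?_, ?_⟩
    · -- degrees
      have hd1 : ∀ a : Fin n, ((1 : MvPolynomial (Fin n) ℝ) - X a).totalDegree ≤ 1 := by
        intro a
        refine le_trans (totalDegree_sub _ _) (max_le ?_ (totalDegree_X a).le)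
        simp [totalDegree_one]
      have hd2 : ∀ a b : Fin n,
          ((1 : MvPolynomial (Fin n) ℝ) - X a - X b).totalDegree ≤ 1 := by
        intro a b
        exact le_trans (totalDegree_sub _ _) (max_le (hd1 a) (totalDegree_X b).le)
      intro i
      refine Fin.addCases (fun j => ?_) (fun j => ?_) i
      · simp only [Fin.addCases_left]
        exact le_trans (totalDegree_mul _ _)
          (add_le_add (hd1 (v 0)) (hd2 _ _))
      · simp only [Fin.addCases_right]
        exact le_trans (totalDegree_mul _ _)
          (add_le_add (totalDegree_X (v 0)).le (hd2 _ _))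
    · -- ideal membership
      rw [SetLike.mem_coe, ← Ideal.Quotient.eq_zero_iff_mem, hsum]
      rw [map_sub, map_sub, map_sum, map_sum, sub_eq_zero]
      have hC : Ideal.Quotient.mk (stableIdeal G) (C ((m+1 : ℕ) : ℝ))
          = ((m : MvPolynomial (Fin n) ℝ ⧸ stableIdeal G) + 1) := by
        rw [MvPolynomial.C_eq_coe_nat, map_natCast]
        push_cast
        ring
      rw [hC]
      have hsplit : ∑ i : Fin ((m+1) + m),
          Ideal.Quotient.mk (stableIdeal G)
            ((Fin.addCases
              (fun j => (1 - X (v 0)) * (1 - X (v (2*j.val+1)) - X (v (2*j.val+2))))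
              (fun j => X (v 0) * (1 - X (v (2*j.val+2)) - X (v (2*j.val+3)))) i) ^ 2)
          = (∑ j ∈ Finset.range (m+1), ((1 - y 0) * (1 - y (2*j+1) - y (2*j+2)))^2)
            + ∑ j ∈ Finset.range m, (y 0 * (1 - y (2*j+2) - y (2*j+3)))^2 := by
        rw [Fin.sum_univ_add]
        congr 1
        · rw [← Fin.sum_univ_eq_sum_range]
          refine Finset.sum_congr rfl fun j _ => ?_
          rw [Fin.addCases_left]
          simp only [map_pow, map_mul, map_sub, map_one]
          rfl
        · rw [← Fin.sum_univ_eq_sum_range]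
          refine Finset.sum_congr rfl fun j _ => ?_
          rw [Fin.addCases_right]
          simp only [map_pow, map_mul, map_sub, map_one]
          rfl
      rw [hsplit]
      exact hkey
  refine ⟨hsos, ?_⟩
  intro p hp
  have hlin : (C ((k : ℕ) : ℝ) - ∑ i ∈ s, X i).totalDegree ≤ 1 := by
    refine le_trans (totalDegree_sub _ _) (max_le ?_ ?_)
    · rw [totalDegree_C]
      omega
    · exact le_trans (totalDegree_finset_sum s _)
        (Finset.sup_le fun i _ => (totalDegree_X i).le)
  have h0 := hp _ hlin hsos
  rw [map_sub, eval_C, map_sum] at h0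
  simp only [eval_X] at h0
  linarith
end

section
/- Let G be an odd cycle of length at least five, i.e., G = ([n], E) with n = 2k+1 ≥ 5 and E = {{i, i+1} : i ∈ [n]} (indices mod n). Then STAB(G) = TH₂(I_G). -/
open MvPolynomial
open Finset MeasureTheory

/-- `S_G`: the set of characteristic vectors of stable sets of `G`. -/
def stableSetVectors {n : ℕ} (G : SimpleGraph (Fin n)) : Set (Fin n → ℝ) :=
  {x | ∃ U : Finset (Fin n), (∀ i ∈ U, ∀ j ∈ U, ¬G.Adj i j) ∧
    x = fun i => if i ∈ U then (1 : ℝ) else 0}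

/-- The stable set polytope `STAB(G) = conv(S_G)`. -/
def stabPolytope {n : ℕ} (G : SimpleGraph (Fin n)) : Set (Fin n → ℝ) :=
  convexHull ℝ (stableSetVectors G)


open Fin.NatCast

section AbstractCert
variable {A : Type*} [CommRing A]

private lemma cyc_sum {n : ℕ} [NeZero n] (c : Fin n) (f : Fin n → A) :
    ∑ i : Fin n, f (i + c) = ∑ i : Fin n, f i :=
  Fintype.sum_equiv (Equiv.addRight c) _ _ (fun _ => rfl)

/-- The main abstract SOS identity for odd cycles. -/
theorem odd_cycle_cert {n k : ℕ} [NeZero n] (hk : 1 ≤ k) (hn : n = 2*k+1) (x : Fin n → A)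
    (hsq : ∀ i, x i ^ 2 = x i) (he : ∀ i, x i * x (i + 1) = 0) :
    (n : A) * ((k : A) - ∑ i, x i) =
      ∑ d ∈ Icc 1 k, ∑ i : Fin n,
        (if d = k then (1:A) else 2) *
          ((if Even d then x i else 1 - x i) *
            (1 - x (i + (d : Fin n)) - x (i + (d : Fin n) + 1))) ^ 2 := by
  set s : A := ∑ i : Fin n, x i with hs
  set y : Fin n → A := fun i => 1 - x i - x (i+1) with hy
  set Qd : ℕ → A := fun d => ∑ i : Fin n, x i * x (i + (d : Fin n)) with hQd
  set u : ℕ → Fin n → A := fun d i => if Even d then x i else 1 - x i with hu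
  set T : ℕ → A := fun d => ∑ i : Fin n, u d i * y (i + (d : Fin n)) with hT
  have hysq : ∀ i, y i ^ 2 = y i := by
    intro i
    simp only [hy]
    linear_combination hsq i + hsq (i+1) + 2 * he i
  have husq : ∀ d i, u d i ^ 2 = u d i := by
    intro d i
    simp only [hu]
    split
    · exact hsq i
    · linear_combination hsq i
  have hcollapse : ∀ d (i : Fin n), ((u d i) * y (i + (d : Fin n))) ^ 2
      = u d i * y (i + (d : Fin n)) := by
    intro d i
    linear_combination (y (i + (d:Fin n)))^2 * husq d i + u d i * hysq (i + (d:Fin n))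
  have hsx : ∀ c : Fin n, ∑ i : Fin n, x (i + c) = s := fun c => cyc_sum c x
  have hsy : ∀ c : Fin n, ∑ i : Fin n, y (i + c) = (n : A) - 2 * s := by
    intro c
    rw [cyc_sum c y]
    simp only [hy]
    rw [Finset.sum_sub_distrib, Finset.sum_sub_distrib, hsx 1, Finset.sum_const,
      Finset.card_univ, Fintype.card_fin]
    push_cast
    ring
  have hTx : ∀ d : ℕ, (∑ i : Fin n, x i * y (i + (d : Fin n))) = s - Qd d - Qd (d+1) := by
    intro d
    have expand : ∀ i : Fin n, x i * y (i + (d : Fin n))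
        = x i - x i * x (i + (d:Fin n)) - x i * x (i + ((d+1 : ℕ) : Fin n)) := by
      intro i
      have hcast : (((d+1 : ℕ)) : Fin n) = (d : Fin n) + 1 := by push_cast; ring
      rw [hcast, ← add_assoc]
      simp only [hy]
      ring
    rw [Finset.sum_congr rfl (fun i _ => expand i), Finset.sum_sub_distrib,
      Finset.sum_sub_distrib]
  have hTz : ∀ d : ℕ, (∑ i : Fin n, (1 - x i) * y (i + (d : Fin n)))
      = (n : A) - 3 * s + Qd d + Qd (d+1) := by
    intro d
    have expand : ∀ i : Fin n, (1 - x i) * y (i + (d : Fin n))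
        = y (i + (d : Fin n)) - x i * y (i + (d : Fin n)) := by intro i; ring
    rw [Finset.sum_congr rfl (fun i _ => expand i), Finset.sum_sub_distrib, hsy, hTx]
    ring
  have hTval : ∀ d : ℕ, T d = if Even d then s - Qd d - Qd (d+1)
      else (n : A) - 3 * s + Qd d + Qd (d+1) := by
    intro d
    by_cases hd : Even d
    · rw [if_pos hd, ← hTx d, hT]
      exact Finset.sum_congr rfl (fun i _ => by simp only [hu, if_pos hd])
    · rw [if_neg hd, ← hTz d, hT]
      exact Finset.sum_congr rfl (fun i _ => by simp only [hu, if_neg hd])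
  have hQ1 : Qd 1 = 0 := by
    simp only [hQd, Nat.cast_one]
    rw [Finset.sum_congr rfl (fun i _ => he i), Finset.sum_const_zero]
  have hQk : Qd (k+1) = Qd k := by
    simp only [hQd]
    have hz : ((k+1 : ℕ) : Fin n) + ((k : ℕ) : Fin n) = 0 := by
      rw [← Nat.cast_add]
      have h2 : (k+1)+k = n := by omega
      rw [h2, Fin.natCast_self]
    have key : ∀ j : Fin n, x (j + ((k+1 : ℕ) : Fin n)) * x ((j + ((k+1:ℕ) : Fin n)) + ((k:ℕ) : Fin n))
        = x j * x (j + ((k+1 : ℕ) : Fin n)) := by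
      intro j
      rw [add_assoc, hz, add_zero, mul_comm]
    calc ∑ i : Fin n, x i * x (i + ((k+1:ℕ) : Fin n))
        = ∑ j : Fin n, x (j + ((k+1:ℕ) : Fin n)) * x ((j + ((k+1:ℕ) : Fin n)) + ((k:ℕ) : Fin n)) := by
          rw [Finset.sum_congr rfl (fun j _ => key j)]
      _ = ∑ i : Fin n, x i * x (i + ((k:ℕ) : Fin n)) :=
          cyc_sum ((k+1:ℕ) : Fin n) (fun j => x j * x (j + ((k:ℕ) : Fin n)))
  have pairing : ∀ m : ℕ, ∑ d ∈ Icc 1 (2*m), 2 * T d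
      = (m : A) * (2 * (n:A) - 4 * s) - 2 * Qd (2*m+1) + 2 * Qd 1 := by
    intro m
    induction m with
    | zero => simp
    | succ m ih =>
      have h1 : 2*(m+1) = (2*m+1)+1 := by ring
      rw [h1, Finset.sum_Icc_succ_top (by omega), Finset.sum_Icc_succ_top (by omega), ih,
        hTval (2*m+1), hTval (2*m+1+1)]
      have hodd : ¬ Even (2*m+1) := by simp [Nat.even_add_one, parity_simps]
      have heven : Even (2*m+1+1) := ⟨m+1, by ring⟩
      rw [if_neg hodd, if_pos heven]
      have h3 : (2*m+1+1+1 : ℕ) = 2*(m+1)+1 := by ring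
      rw [h3]
      push_cast
      ring
  have hgoal : ∑ d ∈ Icc 1 k, (if d = k then (1:A) else 2) * T d = (n : A) * ((k:A) - s) := by
    have hncast : ((n:ℕ) : A) = 2*(k:A)+1 := by rw [hn]; push_cast; ring
    rcases Nat.even_or_odd k with ⟨m, hm⟩ | ⟨m, hm⟩
    · have hm' : k = 2*m := by omega
      have hsplit : ∑ d ∈ Icc 1 k, (if d = k then (1:A) else 2) * T d
          = (∑ d ∈ Icc 1 (2*m), 2 * T d) - T k := by
        rw [hm']
        have h4 : ∀ d ∈ Icc 1 (2*m), (if d = 2*m then (1:A) else 2) * T d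
            = 2 * T d - (if d = 2*m then T d else 0) := by
          intro d _
          split <;> ring
        rw [Finset.sum_congr rfl h4, Finset.sum_sub_distrib,
          Finset.sum_ite_eq' (Icc 1 (2*m)) (2*m) T, if_pos (by simp [Finset.mem_Icc]; omega)]
      rw [hsplit, pairing m, hTval k, if_pos ⟨m, by omega⟩, hQ1]
      have h2m1 : 2*m+1 = k+1 := by omega
      rw [h2m1, hQk]
      have hcast : (k : A) = 2 * (m : A) := by rw [hm']; push_cast; ring
      rw [hncast, hcast]
      ring
    · have hm' : k = 2*m+1 := hm
      have hsplit : ∑ d ∈ Icc 1 k, (if d = k then (1:A) else 2) * T d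
          = (∑ d ∈ Icc 1 (2*m), 2 * T d) + T k := by
        rw [hm', Finset.sum_Icc_succ_top (by omega), if_pos rfl, one_mul]
        congr 1
        refine Finset.sum_congr rfl (fun d hd => ?_)
        rw [if_neg]
        simp only [Finset.mem_Icc] at hd
        omega
      rw [hsplit, pairing m, hTval k, if_neg (by simp [hm', parity_simps]), hQ1]
      have h2m1 : 2*m+1 = k := by omega
      rw [h2m1, hQk]
      have hcast : (k : A) = 2 * (m : A) + 1 := by rw [hm']; push_cast; ring
      rw [hncast, hcast]
      ring
  calc (n : A) * ((k : A) - s) = ∑ d ∈ Icc 1 k, (if d = k then (1:A) else 2) * T d := hgoal.symm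
    _ = ∑ d ∈ Icc 1 k, ∑ i : Fin n,
        (if d = k then (1:A) else 2) * ((u d i) * y (i + (d : Fin n))) ^ 2 := by
        refine Finset.sum_congr rfl (fun d _ => ?_)
        rw [hT, Finset.mul_sum]
        exact Finset.sum_congr rfl (fun i _ => by rw [hcollapse d i])
    _ = _ := by
        refine Finset.sum_congr rfl (fun d _ => Finset.sum_congr rfl (fun i _ => ?_))
        simp only [hu, hy]

end AbstractCert


lemma monomial_classify {σ : Type*} (l : MvPolynomial σ ℝ) (hdeg : l.totalDegree ≤ 1)
    {d : σ →₀ ℕ} (hd : d ∈ l.support) : d = 0 ∨ ∃ j, d = Finsupp.single j 1 := by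
  classical
  by_cases h0 : d = 0
  · exact Or.inl h0
  right
  have hsum : (d.sum fun _ e => e) ≤ 1 := le_trans (MvPolynomial.le_totalDegree hd) hdeg
  obtain ⟨j, hj⟩ : ∃ j, d j ≠ 0 := by
    by_contra hc
    push_neg at hc
    exact h0 (Finsupp.ext fun i => hc i)
  have hjmem : j ∈ d.support := Finsupp.mem_support_iff.mpr hj
  have hsum' : (∑ i ∈ d.support, d i) ≤ 1 := hsum
  have hdj : d j = 1 := by
    have hle : d j ≤ ∑ i ∈ d.support, d i :=
      Finset.single_le_sum (f := fun i => d i) (fun i _ => Nat.zero_le _) hjmem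
    omega
  refine ⟨j, ?_⟩
  have hsupp : d.support ⊆ {j} := by
    intro i hi
    simp only [Finset.mem_singleton]
    by_contra hij
    have hpair : ({i, j} : Finset σ) ⊆ d.support := by
      intro t ht
      simp only [Finset.mem_insert, Finset.mem_singleton] at ht
      rcases ht with rfl | rfl
      · exact hi
      · exact hjmem
    have h2 : d i + d j ≤ ∑ t ∈ d.support, d t := by
      rw [← Finset.sum_pair hij]
      exact Finset.sum_le_sum_of_subset hpair
    have hdi : 1 ≤ d i := Nat.one_le_iff_ne_zero.mpr (Finsupp.mem_support_iff.mp hi)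
    omega
  ext i
  rcases eq_or_ne i j with rfl | hij
  · simp [hdj]
  · have : i ∉ d.support := fun hi => hij (Finset.mem_singleton.mp (hsupp hi))
    simp only [Finsupp.mem_support_iff, not_not] at this
    simp [this, Finsupp.single_apply, (Ne.symm hij)]

lemma eval_affine {σ : Type*} (l : MvPolynomial σ ℝ) (hdeg : l.totalDegree ≤ 1)
    (p q : σ → ℝ) (a b : ℝ) (hab : a + b = 1) :
    eval (fun i => a * p i + b * q i) l = a * eval p l + b * eval q l := by
  rw [eval_eq, eval_eq, eval_eq, Finset.mul_sum, Finset.mul_sum, ← Finset.sum_add_distrib]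
  refine Finset.sum_congr rfl (fun d hd => ?_)
  rcases monomial_classify l hdeg hd with h0 | ⟨j, hj⟩
  · subst h0
    simp only [Finsupp.support_zero, Finset.prod_empty, mul_one]
    linear_combination (MvPolynomial.coeff 0 l) * hab.symm
  · subst hj
    rw [Finsupp.support_single_ne_zero _ one_ne_zero]
    simp only [Finset.prod_singleton, Finsupp.single_eq_same, pow_one]
    ring

lemma eval_zero_of_mem_stableIdeal {n : ℕ} {G : SimpleGraph (Fin n)} {x : Fin n → ℝ}
    (hx : x ∈ stableSetVectors G) {f : MvPolynomial (Fin n) ℝ} (hf : f ∈ stableIdeal G) :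
    eval x f = 0 := by
  obtain ⟨U, hU, rfl⟩ := hx
  induction hf using Submodule.span_induction with
  | mem f hmem =>
    rcases hmem with ⟨i, rfl⟩ | ⟨i, j, hadj, rfl⟩
    · simp only [map_sub, map_pow, eval_X]
      split <;> norm_num
    · simp only [map_mul, eval_X]
      by_cases hi : i ∈ U
      · by_cases hj : j ∈ U
        · exact absurd hadj (hU i hi j hj)
        · simp [hj]
      · simp [hi]
  | zero => simp
  | add f g _ _ hf hg => rw [map_add, hf, hg, add_zero]
  | smul a f _ hf => rw [smul_eq_mul, map_mul, hf, mul_zero]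

lemma stab_subset_theta {n : ℕ} (G : SimpleGraph (Fin n)) :
    stabPolytope G ⊆ thetaBody ((stableIdeal G : Ideal (MvPolynomial (Fin n) ℝ)) :
      Set (MvPolynomial (Fin n) ℝ)) 2 := by
  apply convexHull_min
  · intro x hx l hdeg hsos
    obtain ⟨r, g, hgdeg, hmem⟩ := hsos
    have : eval x l = eval x (l - ∑ i, g i ^ 2) + ∑ i, (eval x (g i))^2 := by
      rw [map_sub, map_sum]
      simp only [map_pow]
      ring
    rw [this, eval_zero_of_mem_stableIdeal hx hmem, zero_add]
    exact Finset.sum_nonneg (fun i _ => sq_nonneg _)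
  · intro p hp q hq a b ha hb hab
    intro l hdeg hsos
    have hcombo : (a • p + b • q) = fun i => a * p i + b * q i := rfl
    rw [hcombo, eval_affine l hdeg p q a b hab]
    have h1 := hp l hdeg hsos
    have h2 := hq l hdeg hsos
    positivity


lemma int_exists_Ioc {a b : ℝ} : (∃ t : ℤ, a < t ∧ (t:ℝ) ≤ b) ↔ ⌊a⌋ < ⌊b⌋ := by
  constructor
  · rintro ⟨t, h1, h2⟩
    have ht1 : ⌊a⌋ < t := Int.floor_lt.mpr h1
    have ht2 : t ≤ ⌊b⌋ := Int.le_floor.mpr h2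
    omega
  · intro h
    refine ⟨⌊a⌋ + 1, ?_, ?_⟩
    · exact_mod_cast Int.lt_floor_add_one a
    · calc ((⌊a⌋ + 1 : ℤ) : ℝ) ≤ (⌊b⌋ : ℝ) := by exact_mod_cast h
        _ ≤ b := Int.floor_le b
lemma floor_shift {c θ : ℝ} (h0 : 0 < θ) (h1 : θ ≤ 1) :
    ⌊c - θ⌋ = ⌊c⌋ - (if Int.fract c < θ then 1 else 0) := by
  have hc : c = ⌊c⌋ + Int.fract c := by rw [Int.floor_add_fract]
  have hf0 : 0 ≤ Int.fract c := Int.fract_nonneg c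
  have hf1 : Int.fract c < 1 := Int.fract_lt_one c
  split
  · rename_i hlt
    rw [Int.floor_eq_iff]
    constructor
    · push_cast
      linarith
    · push_cast
      linarith
  · rename_i hge
    push_neg at hge
    rw [sub_zero, Int.floor_eq_iff]
    constructor
    · linarith
    · push_cast
      linarith

lemma integral_ind_lt (c : ℝ) (hc0 : 0 ≤ c) (hc1 : c < 1) :
    ∫ θ, (if c < θ then (1:ℝ) else 0) ∂(volume.restrict (Set.Ioc (0:ℝ) 1)) = 1 - c := by
  have heq : (fun θ : ℝ => if c < θ then (1:ℝ) else 0)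
      = Set.indicator (Set.Ioi c) (fun _ => (1:ℝ)) := by
    funext θ
    rw [Set.indicator_apply]
    simp [Set.mem_Ioi]
  rw [heq, integral_indicator_const (1:ℝ) measurableSet_Ioi,
    measureReal_restrict_apply measurableSet_Ioi]
  have hset : Set.Ioi c ∩ Set.Ioc 0 1 = Set.Ioc c 1 := by
    ext θ
    simp only [Set.mem_inter_iff, Set.mem_Ioi, Set.mem_Ioc]
    constructor
    · rintro ⟨h1, _, h3⟩; exact ⟨h1, h3⟩
    · rintro ⟨h1, h2⟩; exact ⟨h1, lt_of_le_of_lt hc0 h1, h2⟩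
  rw [hset, Real.volume_real_Ioc, max_eq_left (by linarith), smul_eq_mul, mul_one]

lemma integrable_ind_lt (c : ℝ) :
    Integrable (fun θ : ℝ => if c < θ then (1:ℝ) else 0)
      (volume.restrict (Set.Ioc (0:ℝ) 1)) := by
  have heq : (fun θ : ℝ => if c < θ then (1:ℝ) else 0)
      = Set.indicator (Set.Ioi c) (fun _ => (1:ℝ)) := by
    funext θ
    rw [Set.indicator_apply]
    simp [Set.mem_Ioi]
  rw [heq]
  exact (integrable_const (1:ℝ)).indicator measurableSet_Ioi

instance : IsProbabilityMeasure (volume.restrict (Set.Ioc (0:ℝ) 1)) := by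
  constructor
  rw [Measure.restrict_apply_univ, Real.volume_Ioc]
  norm_num

section Decomp
variable {k : ℕ}

local notation "n" => 2*k+1

lemma mem_stab_of_ineqs (hk : 2 ≤ k) (x : Fin n → ℝ)
    (h0 : ∀ i, 0 ≤ x i) (h1 : ∀ i : Fin n, x i + x (i+1) ≤ 1)
    (h2 : ∑ i, x i ≤ k) :
    x ∈ convexHull ℝ (stableSetVectors (SimpleGraph.cycleGraph n)) := by
  classical
  set μ := volume.restrict (Set.Ioc (0:ℝ) 1) with hμ
  -- basic data
  set X : ℕ → ℝ := fun j => x ((j : ℕ) : Fin n) with hX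
  have hcastsucc : ∀ j : ℕ, ((j+1 : ℕ) : Fin n) = ((j : ℕ) : Fin n) + 1 := by
    intro j; push_cast; ring
  have hXsucc : ∀ j : ℕ, X (j+1) = x (((j:ℕ) : Fin n) + 1) := by
    intro j; rw [hX]; simp only; rw [hcastsucc]
  set T : ℝ := ∑ i : Fin n, x i with hT
  set S : ℝ := k - T with hS
  have hS0 : 0 ≤ S := by rw [hS]; linarith
  have hdenom : (0:ℝ) < 1 + 2*S := by linarith
  set σf : ℕ → ℝ := fun j => 1 - X j - X (j+1) with hσf
  have hσ0 : ∀ j, 0 ≤ σf j := by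
    intro j
    have := h1 ((j : ℕ) : Fin n)
    rw [hσf]
    simp only
    rw [hXsucc j]
    linarith
  set sl : ℕ → ℝ := fun j => S * σf j / (1 + 2*S) with hsl
  have hsl0 : ∀ j, 0 ≤ sl j := fun j => by
    rw [hsl]; exact div_nonneg (mul_nonneg hS0 (hσ0 j)) (le_of_lt hdenom)
  have harc : ∀ j, X j + sl j + X (j+1) ≤ 1 := by
    intro j
    have hslσ : sl j ≤ σf j := by
      rw [hsl]
      rw [div_le_iff₀ hdenom]
      nlinarith [hσ0 j, hS0]
    have : X j + σf j + X (j+1) = 1 := by rw [hσf]; ring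
    linarith
  have hx1 : ∀ i : Fin n, x i ≤ 1 := fun i => by
    have := h1 i; have := h0 (i+1); linarith
  -- cumulative sums
  set Gc : ℕ → ℝ := fun j => ∑ t ∈ range j, (X t + sl t) with hGc
  have hGsucc : ∀ j, Gc (j+1) = Gc j + X j + sl j := by
    intro j; rw [hGc]; simp only; rw [Finset.sum_range_succ]; ring
  have hG0 : Gc 0 = 0 := by rw [hGc]; simp
  -- sums over a full period
  have hsum_univ : ∀ f : Fin n → ℝ, ∑ t ∈ range n, f ((t : ℕ) : Fin n) = ∑ i : Fin n, f i := by
    intro f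
    rw [← Fin.sum_univ_eq_sum_range (fun t => f ((t:ℕ) : Fin n)) n]
    exact Finset.sum_congr rfl (fun i _ => by rw [Fin.cast_val_eq_self])
  have hshift : ∀ f : Fin n → ℝ, ∑ i : Fin n, f (i + 1) = ∑ i : Fin n, f i :=
    fun f => Fintype.sum_equiv (Equiv.addRight 1) _ _ (fun _ => rfl)
  have hTX : ∑ t ∈ range n, X t = T := by rw [hT]; exact hsum_univ x
  have hTX1 : ∑ t ∈ range n, X (t+1) = T := by
    have : ∀ t : ℕ, X (t+1) = (fun i => x (i+1)) ((t : ℕ) : Fin n) := fun t => hXsucc t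
    rw [Finset.sum_congr rfl (fun t _ => this t), hsum_univ (fun i => x (i+1)), hshift x, hT]
  have hσsum : ∑ t ∈ range n, σf t = 1 + 2*S := by
    rw [hσf]
    simp only
    rw [Finset.sum_sub_distrib, Finset.sum_sub_distrib, hTX, hTX1, Finset.sum_const,
      Finset.card_range]
    rw [hS]
    push_cast
    ring
  have hslsum : ∑ t ∈ range n, sl t = S := by
    rw [hsl]
    simp only
    rw [← Finset.sum_div, ← Finset.mul_sum, hσsum]
    field_simp
  have hGn : Gc n = (k : ℝ) := by
    rw [hGc]
    simp only
    rw [Finset.sum_add_distrib, hTX, hslsum, hS]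
    ring
  -- the rounding family
  set F : ℝ → Fin n → ℝ :=
    fun θ i => ((⌊Gc i.val + x i - θ⌋ - ⌊Gc i.val - θ⌋ : ℤ) : ℝ) with hF
  have hXval : ∀ i : Fin n, X i.val = x i := by
    intro i; rw [hX]; simp only; rw [Fin.cast_val_eq_self]
  have hfloor_bounds : ∀ θ (i : Fin n),
      ⌊Gc i.val - θ⌋ ≤ ⌊Gc i.val + x i - θ⌋ ∧ ⌊Gc i.val + x i - θ⌋ ≤ ⌊Gc i.val - θ⌋ + 1 := by
    intro θ i
    constructor
    · exact Int.floor_le_floor (by have := h0 i; linarith)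
    · have : Gc i.val + x i - θ ≤ (Gc i.val - θ) + 1 := by have := hx1 i; linarith
      calc ⌊Gc i.val + x i - θ⌋ ≤ ⌊(Gc i.val - θ) + 1⌋ := Int.floor_le_floor this
        _ = ⌊Gc i.val - θ⌋ + 1 := by rw [Int.floor_add_one]
  have hF01 : ∀ θ (i : Fin n), F θ i = 0 ∨ F θ i = 1 := by
    intro θ i
    obtain ⟨hlo, hhi⟩ := hfloor_bounds θ i
    rw [hF]
    simp only
    rcases (by omega : ⌊Gc i.val + x i - θ⌋ - ⌊Gc i.val - θ⌋ = 0
      ∨ ⌊Gc i.val + x i - θ⌋ - ⌊Gc i.val - θ⌋ = 1) with h | h <;> rw [h]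
    · left; norm_num
    · right; norm_num
  have hSel : ∀ θ (i : Fin n), F θ i = 1 ↔
      ∃ t : ℤ, Gc i.val - θ < t ∧ (t:ℝ) ≤ Gc i.val + x i - θ := by
    intro θ i
    rw [int_exists_Ioc, hF]
    simp only
    constructor
    · intro h
      have : (⌊Gc i.val + x i - θ⌋ - ⌊Gc i.val - θ⌋ : ℤ) = 1 := by exact_mod_cast h
      omega
    · intro h
      have h2 := (hfloor_bounds θ i).2
      have : (⌊Gc i.val + x i - θ⌋ - ⌊Gc i.val - θ⌋ : ℤ) = 1 := by omega
      rw [this]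
      norm_num
  -- stability.
  have hStabPair : ∀ θ, 0 < θ → θ ≤ 1 → ∀ i : Fin n, ¬(F θ i = 1 ∧ F θ (i+1) = 1) := by
    intro θ hθ0 hθ1 i ⟨hi, hi1⟩
    obtain ⟨t, ht1, ht2⟩ := (hSel θ i).mp hi
    obtain ⟨t', ht1', ht2'⟩ := (hSel θ (i+1)).mp hi1
    set w := (i : ℕ) with hw
    by_cases hlt : w + 1 < n
    · -- interior case
      have hval : ((i+1 : Fin n) : ℕ) = w + 1 := by
        rw [Fin.val_add_one]
        split
        · rename_i hlast
          exfalso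
          have : w = 2*k := by rw [hw, hlast]; rfl
          omega
        · rfl
      rw [hval] at ht1' ht2'
      have hGw1 : Gc (w+1) = Gc w + x i + sl w := by
        rw [hGsucc w, hXval i]
      have hxi1 : x (i+1) = X (w+1) := by
        rw [hXsucc w, hw, Fin.cast_val_eq_self]
      have htt : t < t' := by
        have : (t:ℝ) < t' := by
          have := hsl0 w
          rw [hGw1] at ht1'
          linarith
        exact_mod_cast this
      have htreal : (t:ℝ) + 1 ≤ t' := by exact_mod_cast htt
      have harcw := harc w
      rw [hGw1] at ht2'
      rw [← hxi1] at harcw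
      have hXw : X w = x i := by rw [hw, hXval i]
      rw [hXw] at harcw
      -- t' ≤ Gc w + x i + sl w + x(i+1) - θ ≤ Gc w + 1 - θ < t + 1
      have : (t':ℝ) ≤ Gc w + 1 - θ := by
        have : x i + sl w + x (i+1) ≤ 1 := by rw [hxi1]; linarith
        linarith
      linarith
    · -- wrap case: w = n - 1, i + 1 = 0
      have hwn : w + 1 = n := by
        have := i.isLt
        omega
      have hi10 : (i+1 : Fin n) = 0 := by
        have : ((i+1 : Fin n) : ℕ) = 0 := by
          rw [Fin.val_add_one]
          split
          · rfl
          · rename_i hlast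
            exfalso
            apply hlast
            apply Fin.ext
            rw [Fin.val_last]
            omega
        exact Fin.ext this
      rw [hi10] at ht1' ht2'
      simp only [Fin.val_zero, hG0] at ht1' ht2'
      -- t' = 0 and θ ≤ x 0
      have ht'0 : t' = 0 := by
        have hlb : (-1 : ℝ) < t' := by linarith
        have hub : (t' : ℝ) < 1 := by
          have := hx1 0
          linarith
        have h1' : (-1 : ℤ) < t' := by exact_mod_cast hlb
        have h2' : t' < (1 : ℤ) := by exact_mod_cast hub
        omega
      rw [ht'0] at ht2'
      simp only [Int.cast_zero] at ht2'
      have hθx0 : θ ≤ x 0 := by linarith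
      -- bound on t
      have hGn1 : Gc n = Gc w + x i + sl w := by
        rw [← hwn, hGsucc w, hXval i]
      have htk : (t:ℝ) ≤ k - sl w - θ := by
        rw [hGn1] at hGn
        linarith
      have htk1 : (t:ℝ) ≤ (k:ℝ) - 1 := by
        have : (t:ℝ) < k := by
          have := hsl0 w
          linarith
        have h' : t < (k:ℤ) := by exact_mod_cast this
        have : t ≤ (k:ℤ) - 1 := by omega
        calc (t:ℝ) ≤ ((k:ℤ) - 1 : ℤ) := by exact_mod_cast this
          _ = (k:ℝ) - 1 := by push_cast; ring
      -- wrap arc bound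
      have harcw := harc w
      have hXn : X (w+1) = x 0 := by
        rw [hwn, hX]
        simp only
        rw [Fin.natCast_self]
      rw [hXn] at harcw
      have hXw : X w = x i := hXval i
      rw [hXw] at harcw
      -- contradiction
      have : (k:ℝ) < (k:ℝ) - 1 + θ + x i + sl w := by
        rw [hGn1] at hGn
        linarith
      linarith
  -- membership of F θ in stable set vectors
  have hMem : ∀ θ, 0 < θ → θ ≤ 1 → F θ ∈ stableSetVectors (SimpleGraph.cycleGraph n) := by
    intro θ hθ0 hθ1
    set U : Finset (Fin n) := Finset.univ.filter (fun i => F θ i = 1) with hU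
    have hmemU : ∀ i, i ∈ U ↔ F θ i = 1 := by
      intro i; rw [hU]; simp
    refine ⟨U, ?_, ?_⟩
    · intro a ha b hb hadj
      rw [SimpleGraph.cycleGraph_adj'] at hadj
      have hone : ((1 : Fin n) : ℕ) = 1 := by
        rw [Fin.val_one']
        exact Nat.mod_eq_of_lt (by omega)
      rcases hadj with h | h
      · -- (a - b).val = 1, so a = b + 1
        have : a - b = 1 := by
          apply Fin.ext
          rw [h, hone]
        have hab : a = b + 1 := by
          rw [← this]; abel
        exact hStabPair θ hθ0 hθ1 b ⟨(hmemU b).mp hb, by rw [← hab]; exact (hmemU a).mp ha⟩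
      · have : b - a = 1 := by
          apply Fin.ext
          rw [h, hone]
        have hab : b = a + 1 := by
          rw [← this]; abel
        exact hStabPair θ hθ0 hθ1 a ⟨(hmemU a).mp ha, by rw [← hab]; exact (hmemU b).mp hb⟩
    · funext i
      by_cases hFi : F θ i = 1
      · rw [if_pos ((hmemU i).mpr hFi)]
        exact hFi
      · rw [if_neg (fun hmem => hFi ((hmemU i).mp hmem))]
        rcases hF01 θ i with h | h
        · exact h
        · exact absurd h hFi
  -- nice form of coordinates
  set nice : Fin n → ℝ → ℝ := fun i θ =>
    ((⌊Gc i.val + x i⌋ - ⌊Gc i.val⌋ : ℤ) : ℝ)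
      + (if Int.fract (Gc i.val) < θ then (1:ℝ) else 0)
      - (if Int.fract (Gc i.val + x i) < θ then (1:ℝ) else 0) with hnice
  have hnice_eq : ∀ (i : Fin n) (θ : ℝ), 0 < θ → θ ≤ 1 → F θ i = nice i θ := by
    intro i θ hθ0 hθ1
    rw [hF, hnice]
    simp only
    rw [floor_shift hθ0 hθ1, floor_shift hθ0 hθ1]
    push_cast [apply_ite (Int.cast : ℤ → ℝ)]
    ring
  have hnice_int : ∀ i : Fin n, Integrable (nice i) μ := by
    intro i
    apply Integrable.sub
    apply Integrable.add
    · exact integrable_const _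
    · exact integrable_ind_lt _
    · exact integrable_ind_lt _
  have hFi_int : ∀ i : Fin n, Integrable (fun θ => F θ i) μ := by
    intro i
    refine (hnice_int i).congr ?_
    refine (ae_restrict_mem measurableSet_Ioc).mono (fun θ hθ => ?_)
    exact (hnice_eq i θ hθ.1 hθ.2).symm
  have hself_sub : ∀ c : ℝ, ((⌊c⌋ : ℤ) : ℝ) = c - Int.fract c := by
    intro c
    rw [Int.self_sub_fract]
  have hFi_integral : ∀ i : Fin n, ∫ θ, F θ i ∂μ = x i := by
    intro i
    have hcongr : ∫ θ, F θ i ∂μ = ∫ θ, nice i θ ∂μ := by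
      refine integral_congr_ae ?_
      refine (ae_restrict_mem measurableSet_Ioc).mono (fun θ hθ => ?_)
      exact hnice_eq i θ hθ.1 hθ.2
    rw [hcongr, hnice]
    simp only
    have hadd : Integrable (fun θ : ℝ => ((⌊Gc i.val + x i⌋ - ⌊Gc i.val⌋ : ℤ) : ℝ)
        + (if Int.fract (Gc i.val) < θ then (1:ℝ) else 0)) μ :=
      (integrable_const _).add (integrable_ind_lt _)
    rw [integral_sub hadd (integrable_ind_lt _),
      integral_add (integrable_const _) (integrable_ind_lt _),
      integral_const,
      integral_ind_lt _ (Int.fract_nonneg _) (Int.fract_lt_one _),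
      integral_ind_lt _ (Int.fract_nonneg _) (Int.fract_lt_one _)]
    simp only [probReal_univ, one_smul]
    push_cast
    have hA := hself_sub (Gc i.val)
    have hB := hself_sub (Gc i.val + x i)
    linarith
  -- pi-valued assembly
  have hFdecomp : F = fun θ => ∑ i : Fin n, (F θ i) • (Pi.single i (1:ℝ) : Fin n → ℝ) := by
    funext θ j
    rw [Finset.sum_apply]
    simp only [Pi.smul_apply, Pi.single_apply, smul_eq_mul, mul_ite, mul_one, mul_zero,
      Finset.sum_ite_eq, Finset.mem_univ, if_true]
  have hVint : Integrable F μ := by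
    rw [hFdecomp]
    exact integrable_finset_sum _ (fun i _ => (hFi_int i).smul_const _)
  have hVval : ∫ θ, F θ ∂μ = x := by
    rw [hFdecomp, integral_finset_sum _ (fun i _ => (hFi_int i).smul_const _)]
    have key : ∀ i : Fin n, ∫ θ, ((F θ i) • (Pi.single i (1:ℝ) : Fin n → ℝ)) ∂μ
        = (x i) • (Pi.single i (1:ℝ) : Fin n → ℝ) := by
      intro i
      rw [integral_smul_const, hFi_integral i]
    rw [Finset.sum_congr rfl (fun i _ => key i)]
    funext j
    rw [Finset.sum_apply]
    simp only [Pi.smul_apply, Pi.single_apply, smul_eq_mul, mul_ite, mul_one, mul_zero,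
      Finset.sum_ite_eq, Finset.mem_univ, if_true]
  -- finiteness and closedness
  have hfin : (stableSetVectors (SimpleGraph.cycleGraph n)).Finite := by
    apply Set.Finite.subset (Set.finite_range
      (fun U : Finset (Fin n) => fun i => if i ∈ U then (1:ℝ) else 0))
    rintro v ⟨U, _, rfl⟩
    exact ⟨U, rfl⟩
  have hclosed : IsClosed (convexHull ℝ (stableSetVectors (SimpleGraph.cycleGraph n))) :=
    hfin.isClosed_convexHull (𝕜 := ℝ)
  have hae : ∀ᵐ θ ∂μ, F θ ∈ convexHull ℝ (stableSetVectors (SimpleGraph.cycleGraph n)) := by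
    refine (ae_restrict_mem measurableSet_Ioc).mono (fun θ hθ => ?_)
    exact subset_convexHull ℝ _ (hMem θ hθ.1 hθ.2)
  have hmem := Convex.integral_mem (convex_convexHull ℝ _) hclosed hae hVint
  rw [hVval] at hmem
  exact hmem

end Decomp


section KSos
variable {k : ℕ}

/-- helper: build IsKSos from any finite index family -/
lemma isKSos_of_fintype {σ : Type*} {ι : Type*} [Fintype ι] (I : Set (MvPolynomial σ ℝ))
    (m : ℕ) (h : MvPolynomial σ ℝ) (g : ι → MvPolynomial σ ℝ)
    (hdeg : ∀ i, (g i).totalDegree ≤ m) (hmem : h - ∑ i, g i ^ 2 ∈ I) : IsKSos I m h := by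
  refine ⟨Fintype.card ι, g ∘ (Fintype.equivFin ι).symm, fun i => hdeg _, ?_⟩
  have : ∑ i : Fin (Fintype.card ι), (g ((Fintype.equivFin ι).symm i)) ^ 2 = ∑ j : ι, g j ^ 2 :=
    Fintype.sum_equiv (Fintype.equivFin ι).symm _ _ (fun i => rfl)
  simpa [Function.comp, this] using hmem

variable (hk : 2 ≤ k)

local notation "n" => 2*k+1
local notation "Gr" => SimpleGraph.cycleGraph (2*k+1)
local notation "Id" => stableIdeal (SimpleGraph.cycleGraph (2*k+1))
local notation "R" => MvPolynomial (Fin (2*k+1)) ℝ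

include hk in
lemma adj_succ (i : Fin n) : (Gr).Adj i (i+1) := by
  rw [SimpleGraph.cycleGraph_adj']
  right
  rw [add_sub_cancel_left, Fin.val_one']
  exact Nat.mod_eq_of_lt (by omega)

lemma gen_sq_mem (i : Fin n) : (X i ^ 2 - X i : R) ∈ Id :=
  Ideal.subset_span (Or.inl ⟨i, rfl⟩)

lemma gen_edge_mem {i j : Fin n} (h : (Gr).Adj i j) : (X i * X j : R) ∈ Id :=
  Ideal.subset_span (Or.inr ⟨i, j, h, rfl⟩)

lemma cert_X (i : Fin n) : IsKSos (Id : Set R) 2 (X i) := by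
  refine isKSos_of_fintype _ 2 _ (fun _ : Fin 1 => X i) (fun _ => by
    simpa [MvPolynomial.totalDegree_X] using one_le_two) ?_
  have : (X i : R) - ∑ _j : Fin 1, X i ^ 2 = -(X i^2 - X i) := by
    rw [Fin.sum_univ_one]; ring
  rw [this]
  exact neg_mem (gen_sq_mem i)

include hk in
lemma cert_edge (i : Fin n) : IsKSos (Id : Set R) 2 (1 - X i - X (i+1)) := by
  have hdeg : (1 - X i - X (i+1) : R).totalDegree ≤ 1 := by
    refine le_trans (MvPolynomial.totalDegree_sub _ _) ?_
    simp [MvPolynomial.totalDegree_X]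
    refine le_trans (MvPolynomial.totalDegree_sub _ _) ?_
    simp [MvPolynomial.totalDegree_X, MvPolynomial.totalDegree_one]
  refine isKSos_of_fintype _ 2 _ (fun _ : Fin 1 => 1 - X i - X (i+1))
    (fun _ => le_trans hdeg one_le_two) ?_
  have : (1 - X i - X (i+1) : R) - ∑ _j : Fin 1, (1 - X i - X (i+1))^2
      = (-1 : R) * (X i^2 - X i) + (-1) * (X (i+1)^2 - X (i+1)) + (-2) * (X i * X (i+1)) := by
    rw [Fin.sum_univ_one]; ring
  rw [this]
  exact add_mem (add_mem (Ideal.mul_mem_left _ _ (gen_sq_mem i))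
    (Ideal.mul_mem_left _ _ (gen_sq_mem (i+1)))) (Ideal.mul_mem_left _ _
    (gen_edge_mem (adj_succ hk i)))

noncomputable def PP (d : ℕ) (i : Fin n) : R :=
  (if Even d then X i else 1 - X i) *
    (1 - X (i + (d : Fin n)) - X (i + (d : Fin n) + 1))

lemma degPP (d : ℕ) (i : Fin n) : (PP (k := k) d i).totalDegree ≤ 2 := by
  have h1 : ∀ j : Fin n, (1 - X j : R).totalDegree ≤ 1 := by
    intro j
    refine le_trans (MvPolynomial.totalDegree_sub _ _) ?_
    simp [MvPolynomial.totalDegree_X, MvPolynomial.totalDegree_one]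
  have hu : (if Even d then (X i : R) else 1 - X i).totalDegree ≤ 1 := by
    split
    · simp [MvPolynomial.totalDegree_X]
    · exact h1 i
  have hy : ((1 : R) - X (i + (d : Fin n)) - X (i + (d : Fin n) + 1)).totalDegree ≤ 1 := by
    refine le_trans (MvPolynomial.totalDegree_sub _ _) ?_
    simp only [sup_le_iff, MvPolynomial.totalDegree_X]
    exact ⟨h1 _, le_refl _⟩
  refine le_trans (MvPolynomial.totalDegree_mul _ _) ?_
  omega

include hk in
lemma cert_cycle : IsKSos (Id : Set R) 2 ((k : R) - ∑ i, X i) := by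
  classical
  have hn0 : (((n:ℕ)) : ℝ) ≠ 0 := by positivity
  set cR : ℕ → ℝ := fun d => if d = k then 1 else 2 with hcR
  have hc0 : ∀ d, (0:ℝ) ≤ cR d / ((n:ℕ):ℝ) := by
    intro d
    apply div_nonneg _ (by positivity)
    simp only [hcR]
    split <;> norm_num
  set g : Fin n × {d // d ∈ Icc 1 k} → R :=
    fun z => C (Real.sqrt (cR z.2.1 / ((n:ℕ):ℝ))) * PP z.2.1 z.1 with hg
  have hg2 : ∀ z, g z ^ 2 = C (cR z.2.1 / ((n:ℕ):ℝ)) * PP z.2.1 z.1 ^ 2 := by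
    intro z
    rw [hg, mul_pow, ← map_pow, Real.sq_sqrt (hc0 _)]
  refine isKSos_of_fintype _ 2 _ g (fun z => ?_) ?_
  · rw [hg]
    refine le_trans (MvPolynomial.totalDegree_mul _ _) ?_
    rw [MvPolynomial.totalDegree_C]
    simpa using degPP z.2.1 z.1
  -- membership
  set M' : R := (((n:ℕ)) : R) * ((k:R) - ∑ i, X i) -
    ∑ d ∈ Icc 1 k, ∑ i : Fin n, (if d = k then (1:R) else 2) * PP d i ^ 2 with hM'def
  have hM' : M' ∈ Id := by
    rw [← Ideal.Quotient.eq_zero_iff_mem]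
    set π := Ideal.Quotient.mk (Id) with hπ
    have hsq : ∀ i : Fin n, (π (X i))^2 = π (X i) := by
      intro i
      rw [← map_pow, Ideal.Quotient.mk_eq_mk_iff_sub_mem]
      exact gen_sq_mem i
    have he : ∀ i : Fin n, (π (X i)) * (π (X (i+1))) = 0 := by
      intro i
      rw [← map_mul, Ideal.Quotient.eq_zero_iff_mem]
      exact gen_edge_mem (adj_succ hk i)
    have key := odd_cycle_cert (le_trans one_le_two hk) rfl (fun i => π (X i)) hsq he
    rw [hM'def]
    simp only [PP, map_sub, map_mul, map_sum, map_pow, map_natCast, map_one,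
      apply_ite π, map_ofNat]
    rw [sub_eq_zero]
    exact key
  have hfinal : ((k : R) - ∑ i, X i) - ∑ z, g z ^ 2 = C (1/(((n:ℕ)):ℝ)) * M' := by
    have hCif : ∀ d : ℕ, (if d = k then (1:R) else 2) = C (cR d) := by
      intro d
      simp only [hcR]
      split
      · exact (map_one (C : ℝ →+* R)).symm
      · exact (map_ofNat (C : ℝ →+* R) 2).symm
    have hsum2 : ∑ z : Fin n × {d // d ∈ Icc 1 k}, g z ^ 2
        = ∑ d ∈ Icc 1 k, ∑ i : Fin n, C (cR d / ((n:ℕ):ℝ)) * PP d i ^ 2 := by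
      rw [Fintype.sum_prod_type]
      rw [Finset.sum_comm]
      rw [← Finset.sum_coe_sort (Icc 1 k) (fun d => ∑ i : Fin n, C (cR d / ((n:ℕ):ℝ)) * PP d i ^2)]
      exact Finset.sum_congr rfl (fun d _ => Finset.sum_congr rfl (fun i _ => hg2 (i, d)))
    rw [hsum2, hM'def, mul_sub, ← mul_assoc, ← map_natCast (C : ℝ →+* R) (n : ℕ), ← map_mul,
      one_div_mul_cancel hn0, map_one, one_mul, Finset.mul_sum]
    congr 1
    refine Finset.sum_congr rfl (fun d _ => ?_)
    rw [Finset.mul_sum]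
    refine Finset.sum_congr rfl (fun i _ => ?_)
    rw [hCif d, ← mul_assoc, ← map_mul]
    congr 2
    ring
  rw [hfinal]
  exact Ideal.mul_mem_left _ _ hM'

end KSos


/-- If `G` is an odd cycle of length `2k+1 ≥ 5`, then `STAB(G) = TH₂(I_G)`. -/
theorem stabPolytope_eq_thetaBody_two_of_odd_cycle (k : ℕ) (hk : 2 ≤ k) :
    stabPolytope (SimpleGraph.cycleGraph (2 * k + 1)) =
      thetaBody ((stableIdeal (SimpleGraph.cycleGraph (2 * k + 1)) :
        Ideal (MvPolynomial (Fin (2 * k + 1)) ℝ)) : Set (MvPolynomial (Fin (2 * k + 1)) ℝ)) 2 := by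
  apply Set.Subset.antisymm
  · exact stab_subset_theta _
  · intro p hp
    have h0 : ∀ i : Fin (2*k+1), 0 ≤ p i := by
      intro i
      have := hp (X i) (le_of_eq (MvPolynomial.totalDegree_X i)) (cert_X i)
      simpa using this
    have h1 : ∀ i : Fin (2*k+1), p i + p (i+1) ≤ 1 := by
      intro i
      have hdeg : ((1 : MvPolynomial (Fin (2*k+1)) ℝ) - X i - X (i+1)).totalDegree ≤ 1 := by
        refine le_trans (MvPolynomial.totalDegree_sub _ _) ?_
        simp only [sup_le_iff, MvPolynomial.totalDegree_X]
        refine ⟨le_trans (MvPolynomial.totalDegree_sub _ _) ?_, le_refl _⟩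
        simp [MvPolynomial.totalDegree_X, MvPolynomial.totalDegree_one]
      have := hp _ hdeg (cert_edge hk i)
      simp only [map_sub, map_one, eval_X] at this
      linarith
    have h2 : ∑ i, p i ≤ (k : ℝ) := by
      have hdeg : ((k : MvPolynomial (Fin (2*k+1)) ℝ) - ∑ i, X i).totalDegree ≤ 1 := by
        refine le_trans (MvPolynomial.totalDegree_sub _ _) ?_
        rw [sup_le_iff]
        constructor
        · rw [← map_natCast (C : ℝ →+* MvPolynomial (Fin (2*k+1)) ℝ) k,
            MvPolynomial.totalDegree_C]
          omega
        · refine le_trans (MvPolynomial.totalDegree_finset_sum _ _) ?_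
          exact Finset.sup_le (fun i _ => le_of_eq (MvPolynomial.totalDegree_X i))
      have := hp _ hdeg (cert_cycle hk)
      simp only [map_sub, map_natCast, map_sum, eval_X] at this
      linarith
    have hmem := mem_stab_of_ineqs hk p h0 h1 h2
    rw [stabPolytope]
    exact hmem
end

section
/- An ideal I ⊆ ℝ[x₁,…,xₙ] is TH-exact if and only if its real radical √ᴿI is TH-exact. -/
open MvPolynomial

/-- A set of polynomials is `TH_k`-exact if its `k`-th theta body equals the closure of the
convex hull of its real variety, and TH-exact if it is `TH_k`-exact for some `k`. -/
def IsThExact {σ : Type*} (I : Set (MvPolynomial σ ℝ)) : Prop :=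
  ∃ k : ℕ, thetaBody I k = closure (convexHull ℝ (realVariety I))


namespace ThetaAux

variable {n : ℕ}

local notation "MvP" => MvPolynomial (Fin n) ℝ

/-- sum of squares with degree bound on the squared polynomials -/
def SosB (D : ℕ) (h : MvPolynomial (Fin n) ℝ) : Prop :=
  ∃ (r : ℕ) (g : Fin r → MvPolynomial (Fin n) ℝ),
    (∀ i, (g i).totalDegree ≤ D) ∧ h = ∑ i, g i ^ 2

lemma SosB.zero {D : ℕ} : SosB (n := n) D 0 := ⟨0, ![], by simp, by simp⟩

lemma SosB.sq {D : ℕ} {g : MvP} (hg : g.totalDegree ≤ D) : SosB D (g ^ 2) :=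
  ⟨1, ![g], by simpa using hg, by simp⟩

lemma SosB.mono {D D' : ℕ} {h : MvP} (hDD : D ≤ D') (h1 : SosB D h) : SosB D' h := by
  obtain ⟨r, g, hdeg, rfl⟩ := h1
  exact ⟨r, g, fun i => (hdeg i).trans hDD, rfl⟩

lemma SosB.add {D : ℕ} {a b : MvP} (ha : SosB D a) (hb : SosB D b) : SosB D (a + b) := by
  obtain ⟨r, g, hdeg, rfl⟩ := ha
  obtain ⟨r', g', hdeg', rfl⟩ := hb
  refine ⟨r + r', Fin.append g g', ?_, ?_⟩
  · intro i
    induction i using Fin.addCases with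
    | left i => rw [Fin.append_left]; exact hdeg i
    | right i => rw [Fin.append_right]; exact hdeg' i
  · rw [Fin.sum_univ_add]
    congr 1
    · exact Finset.sum_congr rfl fun i _ => by rw [Fin.append_left]
    · exact Finset.sum_congr rfl fun i _ => by rw [Fin.append_right]
lemma SosB.smul {D : ℕ} {c : ℝ} (hc : 0 ≤ c) {h : MvP} (hh : SosB D h) : SosB D (c • h) := by
  obtain ⟨r, g, hdeg, rfl⟩ := hh
  refine ⟨r, fun i => Real.sqrt c • g i, fun i => (totalDegree_smul_le _ _).trans (hdeg i), ?_⟩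
  rw [Finset.smul_sum]
  refine Finset.sum_congr rfl fun i _ => ?_
  rw [smul_pow, Real.sq_sqrt hc]

lemma SosB.mul_sq {D e : ℕ} {h q : MvP} (hh : SosB D h) (hq : q.totalDegree ≤ e) :
    SosB (e + D) (q ^ 2 * h) := by
  obtain ⟨r, g, hdeg, rfl⟩ := hh
  refine ⟨r, fun i => q * g i, fun i => (totalDegree_mul _ _).trans (add_le_add hq (hdeg i)), ?_⟩
  rw [Finset.mul_sum]
  exact Finset.sum_congr rfl fun i _ => by ring

lemma SosB.nsmul {D : ℕ} {h : MvP} (hh : SosB D h) (k : ℕ) : SosB D ((k : MvP) * h) := by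
  have : (k : MvP) * h = (k : ℝ) • h := by
    rw [smul_eq_C_mul]; norm_cast
  rw [this]
  exact hh.smul (by positivity)

lemma SosB.eval_nonneg {D : ℕ} {h : MvP} (hh : SosB D h) (x : Fin n → ℝ) : 0 ≤ eval x h := by
  obtain ⟨r, g, -, rfl⟩ := hh
  rw [map_sum]
  refine Finset.sum_nonneg fun i _ => ?_
  rw [map_pow]
  positivity

lemma SosB.totalDegree_le {D : ℕ} {h : MvP} (hh : SosB D h) : h.totalDegree ≤ 2 * D := by
  obtain ⟨r, g, hdeg, rfl⟩ := hh
  refine totalDegree_finsetSum_le fun i _ => ?_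
  calc (g i ^ 2).totalDegree ≤ 2 * (g i).totalDegree := totalDegree_pow _ _
    _ ≤ 2 * D := Nat.mul_le_mul_left _ (hdeg i)

/-! ### Certificates for real radical membership, with degree bounds -/

def Cert (I : Ideal (MvPolynomial (Fin n) ℝ)) (m D : ℕ) (f : MvPolynomial (Fin n) ℝ) : Prop :=
  ∃ τ, SosB D τ ∧ f ^ (2 * m) + τ ∈ I

lemma cert_of_mem_realRadical {I : Ideal MvP} {f : MvP}
    (hf : f ∈ realRadical (I : Set MvP)) : ∃ m D, Cert I m D f := by
  obtain ⟨m, r, g, hg⟩ := hf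
  exact ⟨m, Finset.univ.sup fun i => (g i).totalDegree,
    ∑ i, g i ^ 2, ⟨r, g, fun i => Finset.le_sup (f := fun i => (g i).totalDegree) (Finset.mem_univ i), rfl⟩, hg⟩

lemma Cert.mono {I : Ideal MvP} {m D D' : ℕ} {f : MvP} (hDD : D ≤ D')
    (h : Cert I m D f) : Cert I m D' f := by
  obtain ⟨τ, hτ, hm⟩ := h
  exact ⟨τ, hτ.mono hDD, hm⟩

lemma Cert.raise {I : Ideal MvP} {m D d M : ℕ} {f : MvP} (hfd : f.totalDegree ≤ d)
    (h : Cert I m D f) (hmM : m ≤ M) : Cert I M ((M - m) * d + D) f := by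
  obtain ⟨τ, hτ, hm⟩ := h
  refine ⟨f ^ (2 * (M - m)) * τ, ?_, ?_⟩
  · have : f ^ (2 * (M - m)) * τ = (f ^ (M - m)) ^ 2 * τ := by ring
    rw [this]
    exact hτ.mul_sq ((totalDegree_pow _ _).trans (Nat.mul_le_mul_left _ hfd))
  · have : f ^ (2 * M) + f ^ (2 * (M - m)) * τ = f ^ (2 * (M - m)) * (f ^ (2 * m) + τ) := by
      rw [mul_add, ← pow_add]
      congr 2
      omega
    rw [this]
    exact Ideal.mul_mem_left _ _ hm

lemma Cert.smul {I : Ideal MvP} {m D : ℕ} {f : MvP} (c : ℝ)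
    (h : Cert I m D f) : Cert I m D (c • f) := by
  obtain ⟨τ, hτ, hm⟩ := h
  refine ⟨c ^ (2 * m) • τ, ?_, ?_⟩
  · have : c ^ (2 * m) = (c ^ m) ^ 2 := by ring
    rw [this]
    exact hτ.smul (sq_nonneg _) |>.mono le_rfl
  · have : (c • f) ^ (2 * m) + c ^ (2 * m) • τ = c ^ (2 * m) • (f ^ (2 * m) + τ) := by
      rw [smul_pow, smul_add]
    rw [this, smul_eq_C_mul]
    exact Ideal.mul_mem_left _ _ hm
lemma even_image_filter (N : ℕ) :
    (Finset.range (N+1)).image (fun u => 2*u)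
      = (Finset.range (2*N+1)).filter (fun k => Even k) := by
  ext k
  simp only [Finset.mem_image, Finset.mem_filter, Finset.mem_range]
  constructor
  · rintro ⟨u, hu, rfl⟩
    exact ⟨by omega, ⟨u, by ring⟩⟩
  · rintro ⟨hk, r, rfl⟩
    exact ⟨r, by omega, by ring⟩

lemma even_pow_add_sub {R : Type*} [CommRing R] (x y : R) (N : ℕ) :
    (x + y) ^ (2*N) + (x - y) ^ (2*N)
      = ∑ u ∈ Finset.range (N+1), 2 * ((2*N).choose (2*u) : R) * (x^(2*u) * y^(2*(N-u))) := by
  have hsub : x - y = x + (-y) := by ring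
  rw [add_pow, hsub, add_pow, ← Finset.sum_add_distrib]
  have step : ∀ k ∈ Finset.range (2*N+1),
      x ^ k * y ^ (2*N - k) * ((2*N).choose k : R)
        + x ^ k * (-y) ^ (2*N - k) * ((2*N).choose k : R)
      = if Even k then 2 * ((2*N).choose k : R) * (x^k * y^(2*N-k)) else 0 := by
    intro k hk
    simp only [Finset.mem_range] at hk
    by_cases h : Even k
    · have hek : Even (2*N - k) := by rw [Nat.even_sub (by omega)]; simp [h, parity_simps]
      rw [if_pos h, Even.neg_pow hek]
      ring
    · have hok : Odd (2*N - k) := Nat.Even.sub_odd (by omega) ⟨N, by ring⟩ (Nat.not_even_iff_odd.mp h)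
      rw [if_neg h, Odd.neg_pow hok]
      ring
  rw [Finset.sum_congr rfl step, Finset.sum_ite, Finset.sum_const_zero, add_zero,
    ← even_image_filter, Finset.sum_image (by intro a _ b _ h; simp only at h; omega)]
  refine Finset.sum_congr rfl fun u hu => ?_
  simp only [Finset.mem_range] at hu
  have : 2*N - 2*u = 2*(N-u) := by omega
  rw [this]

lemma SosB.finsetSum {D : ℕ} {α : Type*} (s : Finset α) (t : α → MvP)
    (h : ∀ u ∈ s, SosB D (t u)) : SosB D (∑ u ∈ s, t u) := by
  induction s using Finset.cons_induction with
  | empty => simpa using SosB.zero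
  | cons a s ha ih =>
    rw [Finset.sum_cons]
    exact (h a (Finset.mem_cons_self a s)).add (ih fun u hu => h u (Finset.mem_cons.mpr (Or.inr hu)))

lemma Cert.add {I : Ideal MvP} {M D₁ D₂ d : ℕ} {f g : MvP}
    (hfd : f.totalDegree ≤ d) (hgd : g.totalDegree ≤ d)
    (hf : Cert I M D₁ f) (hg : Cert I M D₂ g) :
    Cert I (2 * M) (2 * M * d + (D₁ + D₂)) (f + g) := by
  obtain ⟨τf, hτf, hmf⟩ := hf
  obtain ⟨τg, hτg, hmg⟩ := hg
  set N := 2 * M with hN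
  set w : ℕ → MvP := fun u => if M ≤ u then f ^ (u - M) * g ^ (N - u) else f ^ u * g ^ (N - u - M)
    with hw
  set τ : ℕ → MvP := fun u => if M ≤ u then τf else τg with hτ
  set P : ℕ → MvP := fun u => if M ≤ u then f ^ (2*M) else g ^ (2*M) with hP
  -- the key per-term identity
  have key : ∀ u ∈ Finset.range (N+1), (w u) ^ 2 * P u = f ^ (2*u) * g ^ (2*(N-u)) := by
    intro u hu
    simp only [Finset.mem_range] at hu
    by_cases h : M ≤ u
    · have e : 2*(u-M) + 2*M = 2*u := by omega
      calc (w u)^2 * P u = f^(2*(u-M)) * f^(2*M) * g^(2*(N-u)) := by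
            simp only [hw, hP, if_pos h, mul_pow, ← pow_mul]; ring
        _ = f^(2*u) * g^(2*(N-u)) := by rw [← pow_add, e]
    · have e : 2*(N-u-M) + 2*M = 2*(N-u) := by omega
      calc (w u)^2 * P u = f^(2*u) * (g^(2*(N-u-M)) * g^(2*M)) := by
            simp only [hw, hP, if_neg h, mul_pow, ← pow_mul]; ring
        _ = f^(2*u) * g^(2*(N-u)) := by rw [← pow_add, e]
  -- the degree bound for the multipliers
  have wdeg : ∀ u ∈ Finset.range (N+1), (w u).totalDegree ≤ M * d := by
    intro u hu
    simp only [Finset.mem_range] at hu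
    by_cases h : M ≤ u
    · rw [hw]; simp only [if_pos h]
      calc (f ^ (u-M) * g ^ (N-u)).totalDegree
          ≤ (f^(u-M)).totalDegree + (g^(N-u)).totalDegree := totalDegree_mul _ _
        _ ≤ (u-M) * d + (N-u) * d := add_le_add
            ((totalDegree_pow _ _).trans (Nat.mul_le_mul_left _ hfd))
            ((totalDegree_pow _ _).trans (Nat.mul_le_mul_left _ hgd))
        _ ≤ M * d := by rw [← add_mul]; exact Nat.mul_le_mul_right _ (by omega)
    · rw [hw]; simp only [if_neg h]
      calc (f ^ u * g ^ (N-u-M)).totalDegree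
          ≤ (f^u).totalDegree + (g^(N-u-M)).totalDegree := totalDegree_mul _ _
        _ ≤ u * d + (N-u-M) * d := add_le_add
            ((totalDegree_pow _ _).trans (Nat.mul_le_mul_left _ hfd))
            ((totalDegree_pow _ _).trans (Nat.mul_le_mul_left _ hgd))
        _ ≤ M * d := by rw [← add_mul]; exact Nat.mul_le_mul_right _ (by omega)
  refine ⟨((f - g) ^ N) ^ 2
      + ∑ u ∈ Finset.range (N+1), 2 * ((2*N).choose (2*u) : MvP) * ((w u)^2 * τ u), ?_, ?_⟩
  · refine SosB.add ?_ ?_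
    · refine SosB.sq ?_
      calc ((f-g)^N).totalDegree ≤ N * max f.totalDegree (g.totalDegree) := by
            refine (totalDegree_pow _ _).trans (Nat.mul_le_mul_left _ ?_)
            exact (totalDegree_sub _ _).trans (max_le_max le_rfl le_rfl)
        _ ≤ 2 * M * d + (D₁ + D₂) := by
            have : max f.totalDegree g.totalDegree ≤ d := max_le hfd hgd
            calc N * max f.totalDegree g.totalDegree ≤ N * d := Nat.mul_le_mul_left _ this
              _ ≤ 2 * M * d + (D₁ + D₂) := by rw [hN]; omega
    · refine SosB.finsetSum _ _ fun u hu => ?_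
      have h1 : SosB (M * d + (D₁ + D₂)) ((w u)^2 * τ u) := by
        by_cases h : M ≤ u
        · rw [hτ]; simp only [if_pos h]
          exact (hτf.mono (by omega)).mul_sq (wdeg u hu)
        · rw [hτ]; simp only [if_neg h]
          exact (hτg.mono (by omega)).mul_sq (wdeg u hu)
      have h2 := (h1.nsmul (2 * (2*N).choose (2*u))).mono
        (show M * d + (D₁ + D₂) ≤ 2 * M * d + (D₁ + D₂) by
          have : M * d ≤ 2 * M * d := Nat.mul_le_mul_right _ (by omega)
          omega)
      refine h2.mono le_rfl |>.mono le_rfl |> fun hh => ?_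
      convert hh using 2
      push_cast
      ring
  · have hEq : (f + g) ^ (2*N)
        + (((f - g) ^ N) ^ 2
          + ∑ u ∈ Finset.range (N+1), 2 * ((2*N).choose (2*u) : MvP) * ((w u)^2 * τ u))
        = ∑ u ∈ Finset.range (N+1), 2 * ((2*N).choose (2*u) : MvP) * ((w u)^2 * (P u + τ u)) := by
      have e2 : ((f - g) ^ N) ^ 2 = (f - g) ^ (2*N) := by rw [← pow_mul]; ring_nf
      calc (f + g) ^ (2*N) + (((f - g) ^ N) ^ 2
            + ∑ u ∈ Finset.range (N+1), 2 * ((2*N).choose (2*u) : MvP) * ((w u)^2 * τ u))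
          = ((f + g) ^ (2*N) + (f - g) ^ (2*N))
            + ∑ u ∈ Finset.range (N+1), 2 * ((2*N).choose (2*u) : MvP) * ((w u)^2 * τ u) := by
            rw [e2]; ring
        _ = ∑ u ∈ Finset.range (N+1), (2 * ((2*N).choose (2*u) : MvP) * (f^(2*u) * g^(2*(N-u)))
              + 2 * ((2*N).choose (2*u) : MvP) * ((w u)^2 * τ u)) := by
            rw [even_pow_add_sub, ← Finset.sum_add_distrib]
        _ = ∑ u ∈ Finset.range (N+1), 2 * ((2*N).choose (2*u) : MvP) * ((w u)^2 * (P u + τ u)) := by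
            refine Finset.sum_congr rfl fun u hu => ?_
            rw [← key u hu]
            ring
    rw [hN] at hEq ⊢
    rw [hEq]
    refine Ideal.sum_mem _ fun u hu => ?_
    refine Ideal.mul_mem_left _ _ ?_
    refine Ideal.mul_mem_left _ _ ?_
    by_cases h : M ≤ u
    · rw [hP, hτ]; simp only [if_pos h]; exact hmf
    · rw [hP, hτ]; simp only [if_neg h]; exact hmg

lemma span_cert {α : Type*} (I : Ideal MvP) (d : ℕ) (T : Finset α) (v : α → MvP)
    (hdeg : ∀ t ∈ T, (v t).totalDegree ≤ d)
    (hrad : ∀ t ∈ T, ∃ m D, Cert I m D (v t)) :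
    ∃ M D, 0 < M ∧ ∀ c : α → ℝ, Cert I M D (∑ t ∈ T, c t • v t) := by
  induction T using Finset.cons_induction with
  | empty => exact ⟨1, 0, one_pos, fun c => ⟨0, SosB.zero, by simp⟩⟩
  | cons a T ha ih =>
    obtain ⟨M, D, hM, hc⟩ := ih (fun t ht => hdeg t (Finset.mem_cons.mpr (Or.inr ht)))
      (fun t ht => hrad t (Finset.mem_cons.mpr (Or.inr ht)))
    obtain ⟨ma, Da, hca⟩ := hrad a (Finset.mem_cons_self a T)
    set M' := max M ma with hM'
    refine ⟨2 * M', 2 * M' * d + (((M' - ma) * d + Da) + ((M' - M) * d + D)), by omega,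
      fun c => ?_⟩
    rw [Finset.sum_cons]
    have hda : (c a • v a).totalDegree ≤ d :=
      (totalDegree_smul_le _ _).trans (hdeg a (Finset.mem_cons_self a T))
    have hdT : (∑ t ∈ T, c t • v t).totalDegree ≤ d :=
      totalDegree_finsetSum_le fun t ht =>
        (totalDegree_smul_le _ _).trans (hdeg t (Finset.mem_cons.mpr (Or.inr ht)))
    have h1 : Cert I M' ((M' - ma) * d + Da) (c a • v a) :=
      (hca.smul (c a)).raise hda (le_max_right _ _)
    have h2 : Cert I M' ((M' - M) * d + D) (∑ t ∈ T, c t • v t) :=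
      (hc c).raise hdT (le_max_left _ _)
    exact Cert.add hda hdT h1 h2

lemma uniform_cert (I : Ideal MvP) (d : ℕ) :
    ∃ M D, 0 < M ∧ ∀ f : MvP, f.totalDegree ≤ d →
      f ∈ realRadical (I : Set MvP) → Cert I M D f := by
  classical
  set V := MvPolynomial.restrictTotalDegree (Fin n) ℝ d with hV
  haveI : IsNoetherian ℝ V := IsNoetherian.iff_fg.mpr inferInstance
  set S : Set V := {v | (v : MvP) ∈ realRadical (I : Set MvP)} with hS
  obtain ⟨b, hbS, hspan, hbind⟩ := exists_linearIndependent ℝ S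
  have hfin : b.Finite := hbind.set_finite_of_isNoetherian
  obtain ⟨M, D, hM, hcert⟩ := span_cert I d hfin.toFinset (fun t => (t : MvP))
    (fun t _ => (MvPolynomial.mem_restrictTotalDegree _ _ _).mp t.2)
    (fun t ht => cert_of_mem_realRadical (hbS (hfin.mem_toFinset.mp ht)))
  refine ⟨M, D, hM, fun f hfd hfr => ?_⟩
  set fV : V := ⟨f, (MvPolynomial.mem_restrictTotalDegree _ _ _).mpr hfd⟩ with hfV
  have h1 : fV ∈ Submodule.span ℝ b := by
    rw [hspan]
    exact Submodule.subset_span hfr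
  rw [← hfin.coe_toFinset] at h1
  obtain ⟨c, -, hc⟩ := Submodule.mem_span_finset.mp h1
  have h2 : (∑ t ∈ hfin.toFinset, c t • (t : MvP)) = f := by
    have := congrArg (Subtype.val) hc
    simpa using this
  rw [← h2]
  exact hcert c

lemma C_mul_add_sq (a b : ℝ) (X : MvP) :
    C a * (X + C b)^2 = C a * X^2 + C (a*(2*b)) * X + C (a*b^2) := by
  simp only [map_mul, map_pow, map_ofNat]
  ring

lemma C_mul_sub_sq (a b : ℝ) (X : MvP) :
    C a * (X - C b)^2 = C a * X^2 - C (a*(2*b)) * X + C (a*b^2) := by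
  simp only [map_mul, map_pow, map_ofNat]
  ring

lemma chain (r : ℕ) (f : MvP) (d : ℕ) (hfd : f.totalDegree ≤ d) :
    ∀ ε : ℝ, 0 < ε → ∃ K : ℝ, 0 < K ∧ SosB (2^r * d) (C ε + f + K • f ^ (2 * 2^r)) := by
  induction r with
  | zero =>
    intro ε hε
    refine ⟨1/(4*ε), by positivity, ?_⟩
    have hεne : ε ≠ 0 := ne_of_gt hε
    have hEq : C ε + f + (1/(4*ε)) • f ^ (2 * 2^0) = (Real.sqrt (1/(4*ε)) • (f + C (2*ε)))^2 := by
      rw [smul_pow, Real.sq_sqrt (by positivity), pow_zero, mul_one, smul_eq_C_mul,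
        smul_eq_C_mul, C_mul_add_sq]
      have c1 : (1/(4*ε))*(2*(2*ε)) = 1 := by field_simp; ring
      have c2 : (1/(4*ε))*(2*ε)^2 = ε := by field_simp; ring
      rw [c1, c2, map_one]
      ring
    rw [hEq]
    refine SosB.sq ?_
    calc ((Real.sqrt (1/(4*ε))) • (f + C (2*ε))).totalDegree
        ≤ (f + C (2*ε)).totalDegree := totalDegree_smul_le _ _
      _ ≤ max f.totalDegree (C (2*ε) : MvP).totalDegree := totalDegree_add _ _
      _ ≤ 2^0 * d := by rw [totalDegree_C]; simpa using hfd
  | succ r ih =>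
    intro ε hε
    obtain ⟨K, hK, hS⟩ := ih (ε/2) (by positivity)
    have hKne : K ≠ 0 := ne_of_gt hK
    have hεne : ε ≠ 0 := ne_of_gt hε
    refine ⟨K^2/(2*ε), by positivity, ?_⟩
    have hpow : f ^ (2 * 2^(r+1)) = (f ^ (2 * 2^r))^2 := by
      rw [← pow_mul]
      ring_nf
    have hEq : C ε + f + (K^2/(2*ε)) • f ^ (2 * 2^(r+1))
        = (C (ε/2) + f + K • f ^ (2 * 2^r))
          + (K^2/(2*ε)) • (f ^ (2 * 2^r) - C (ε/K))^2 := by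
      rw [hpow, smul_eq_C_mul, smul_eq_C_mul, smul_eq_C_mul, C_mul_sub_sq]
      have k1 : (K^2/(2*ε))*(2*(ε/K)) = K := by field_simp
      have k2 : (K^2/(2*ε))*(ε/K)^2 = ε/2 := by field_simp
      rw [k1, k2, show ε = ε/2 + ε/2 by ring, map_add]
      ring
    rw [hEq]
    refine (hS.mono ?_).add (SosB.smul (by positivity) (SosB.sq ?_))
    · exact Nat.mul_le_mul_right _ (Nat.pow_le_pow_right (by omega) (by omega))
    · calc (f ^ (2 * 2^r) - C (ε/K)).totalDegree
          ≤ max (f ^ (2 * 2^r)).totalDegree (C (ε/K) : MvP).totalDegree := totalDegree_sub _ _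
        _ ≤ 2^(r+1) * d := by
            rw [totalDegree_C]
            simp only [max_le_iff]
            refine ⟨(totalDegree_pow _ _).trans ?_, by omega⟩
            calc 2 * 2^r * f.totalDegree ≤ 2 * 2^r * d := Nat.mul_le_mul_left _ hfd
              _ = 2^(r+1) * d := by ring

/-! ### Linear polynomials evaluate affinely -/

lemma monomial_deg_le_one {m : Fin n →₀ ℕ} (h : (m.sum fun _ e => e) ≤ 1) :
    m = 0 ∨ ∃ i, m = Finsupp.single i 1 := by
  by_cases h0 : m = 0
  · exact Or.inl h0
  · obtain ⟨i, hi⟩ := Finsupp.ne_iff.mp h0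
    simp only [Finsupp.coe_zero, Pi.zero_apply] at hi
    have himem : i ∈ m.support := Finsupp.mem_support_iff.mpr hi
    have hle : m i ≤ m.sum fun _ e => e := by
      refine Finset.single_le_sum (fun j _ => Nat.zero_le _) himem
    have hmi : m i = 1 := by omega
    refine Or.inr ⟨i, ?_⟩
    ext j
    by_cases hji : j = i
    · subst hji; simp [hmi]
    · simp only [Finsupp.single_apply, if_neg (Ne.symm hji)]
      by_contra hj
      have hjmem : j ∈ m.support := Finsupp.mem_support_iff.mpr hj
      have h2 : m j + m i ≤ m.sum fun _ e => e := by
        have hsub : ({j, i} : Finset (Fin n)) ⊆ m.support := by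
          intro u hu
          simp only [Finset.mem_insert, Finset.mem_singleton] at hu
          rcases hu with rfl | rfl <;> assumption
        calc m j + m i = ∑ u ∈ ({j, i} : Finset (Fin n)), m u := by
              rw [Finset.sum_pair hji]
          _ ≤ _ := Finset.sum_le_sum_of_subset hsub
      omega

lemma eval_affine {l : MvP} (hl : l.totalDegree ≤ 1) (x : Fin n → ℝ) :
    eval x l = coeff 0 l + ∑ i, coeff (Finsupp.single i 1) l * x i := by
  classical
  rw [eval_eq]
  set F : Finset (Fin n →₀ ℕ) := insert 0 (Finset.univ.image fun i => Finsupp.single i 1) with hF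
  have hsub : l.support ⊆ F := by
    intro s hs
    have := (le_totalDegree hs).trans hl
    rcases monomial_deg_le_one this with rfl | ⟨i, rfl⟩
    · exact Finset.mem_insert_self _ _
    · exact Finset.mem_insert_of_mem (Finset.mem_image.mpr ⟨i, Finset.mem_univ i, rfl⟩)
  rw [Finset.sum_subset hsub (fun s _ hs => by
    rw [MvPolynomial.notMem_support_iff.mp hs, zero_mul])]
  have h0 : (0 : Fin n →₀ ℕ) ∉ Finset.univ.image fun i => Finsupp.single i (1:ℕ) := by
    simp only [Finset.mem_image, not_exists]
    rintro i ⟨-, he⟩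
    exact one_ne_zero (α := ℕ) (by simpa using (Finsupp.ext_iff.mp he) i)
  rw [hF, Finset.sum_insert h0, Finset.sum_image (fun a _ b _ h =>
    Finsupp.single_left_injective one_ne_zero h)]
  congr 1
  · simp
  · refine Finset.sum_congr rfl fun i _ => ?_
    congr 1
    rw [Finsupp.support_single_ne_zero _ one_ne_zero]
    simp

/-! ### Theta bodies are closed convex sets containing the variety hull -/

lemma convex_thetaBody (S : Set MvP) (k : ℕ) : Convex ℝ (thetaBody S k) := by
  intro x hx y hy a b ha hb hab
  intro l hl hsos
  have hevalx := hx l hl hsos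
  have hevaly := hy l hl hsos
  have key : eval (a • x + b • y) l = a * eval x l + b * eval y l := by
    rw [eval_affine hl, eval_affine hl, eval_affine hl]
    have hsum : ∑ i, coeff (Finsupp.single i 1) l * (a • x + b • y) i
        = a * (∑ i, coeff (Finsupp.single i 1) l * x i)
          + b * (∑ i, coeff (Finsupp.single i 1) l * y i) := by
      rw [Finset.mul_sum, Finset.mul_sum, ← Finset.sum_add_distrib]
      refine Finset.sum_congr rfl fun i _ => ?_
      simp only [Pi.add_apply, Pi.smul_apply, smul_eq_mul]
      ring
    rw [hsum]
    have hc : coeff 0 l = a * coeff 0 l + b * coeff 0 l := by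
      rw [← add_mul, hab, one_mul]
    linear_combination (-(coeff 0 l)) * hab
  rw [key]
  exact add_nonneg (mul_nonneg ha hevalx) (mul_nonneg hb hevaly)

lemma isClosed_thetaBody (S : Set MvP) (k : ℕ) : IsClosed (thetaBody S k) := by
  have : thetaBody S k = ⋂ (l : MvP) (_ : l.totalDegree ≤ 1) (_ : IsKSos S k l),
      {p : Fin n → ℝ | 0 ≤ eval p l} := by
    ext p
    simp only [thetaBody, Set.mem_setOf_eq, Set.mem_iInter]
  rw [this]
  refine isClosed_iInter fun l => isClosed_iInter fun hl => isClosed_iInter fun _ => ?_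
  have : {p : Fin n → ℝ | 0 ≤ eval p l}
      = {p : Fin n → ℝ | 0 ≤ coeff 0 l + ∑ i, coeff (Finsupp.single i 1) l * p i} := by
    ext p
    rw [Set.mem_setOf_eq, Set.mem_setOf_eq, eval_affine hl]
  rw [this]
  refine isClosed_le continuous_const ?_
  exact continuous_const.add (continuous_finset_sum _ fun i _ =>
    continuous_const.mul (continuous_apply i))

lemma realVariety_subset_thetaBody (S : Set MvP) (k : ℕ) :
    realVariety S ⊆ thetaBody S k := by
  intro x hx l hl hsos
  obtain ⟨r, g, hdeg, hmem⟩ := hsos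
  have h0 : eval x (l - ∑ i, g i ^ 2) = 0 := hx _ hmem
  rw [map_sub, sub_eq_zero] at h0
  rw [h0, map_sum]
  refine Finset.sum_nonneg fun i _ => ?_
  rw [map_pow]
  positivity

lemma closure_convexHull_subset_thetaBody (S : Set MvP) (k : ℕ) :
    closure (convexHull ℝ (realVariety S)) ⊆ thetaBody S k :=
  closure_minimal (convexHull_min (realVariety_subset_thetaBody S k) (convex_thetaBody S k))
    (isClosed_thetaBody S k)

/-! ### The varieties agree, and theta bodies are antitone in the ideal -/

lemma subset_realRadical (I : Ideal MvP) : (I : Set MvP) ⊆ realRadical (I : Set MvP) := by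
  intro f hf
  refine ⟨1, 0, ![], ?_⟩
  have : f ^ (2*1) + ∑ i : Fin 0, (![] : Fin 0 → MvP) i ^ 2 = f * f := by
    simp [pow_two]
  rw [this]
  exact Ideal.mul_mem_left _ _ hf

lemma realVariety_realRadical (I : Ideal MvP) :
    realVariety (realRadical (I : Set MvP)) = realVariety (I : Set MvP) := by
  ext x
  constructor
  · intro hx f hf
    exact hx f (subset_realRadical I hf)
  · intro hx f hf
    obtain ⟨m, r, g, hmem⟩ := hf
    have h0 : eval x (f ^ (2*m) + ∑ i, g i ^ 2) = 0 := hx _ hmem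
    rw [map_add, map_pow, map_sum] at h0
    have hsq : 0 ≤ ∑ i, eval x (g i ^ 2) := by
      refine Finset.sum_nonneg fun i _ => ?_
      rw [map_pow]; positivity
    have hpow : (eval x f) ^ (2*m) = 0 := by
      have : 0 ≤ (eval x f) ^ (2*m) := by
        have : (eval x f) ^ (2*m) = ((eval x f) ^ m)^2 := by ring
        rw [this]; positivity
      linarith
    rcases Nat.eq_zero_or_pos m with rfl | hm
    · simp at hpow
    · exact pow_eq_zero_iff (by omega) |>.mp hpow

lemma thetaBody_anti {S T : Set MvP} (hST : S ⊆ T) (k : ℕ) :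
    thetaBody T k ⊆ thetaBody S k := by
  intro p hp l hl hsos
  obtain ⟨r, g, hdeg, hmem⟩ := hsos
  exact hp l hl ⟨r, g, hdeg, hST hmem⟩

/-! ### The hard direction: a theta body of `I` inside the theta body of the real radical -/

lemma exists_thetaBody_subset (I : Ideal MvP) (k : ℕ) :
    ∃ J : ℕ, thetaBody (I : Set MvP) J ⊆ thetaBody (realRadical (I : Set MvP)) k := by
  classical
  set d := max 1 (2*k) with hd
  obtain ⟨M₀, D, hM₀, hcert⟩ := uniform_cert I d
  set E := 2 ^ M₀ with hE
  have hM₀E : M₀ ≤ E := (Nat.lt_two_pow_self (n := M₀)).le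
  set J := k + E * d + (E * d + D) with hJ
  refine ⟨J, fun p hp => ?_⟩
  intro l hl hsos
  obtain ⟨r, g, hdeg, hmem⟩ := hsos
  set f := l - ∑ i, g i ^ 2 with hf
  have hσd : (∑ i, g i ^ 2).totalDegree ≤ d := by
    refine totalDegree_finsetSum_le fun i _ => ?_
    calc (g i ^ 2).totalDegree ≤ 2 * (g i).totalDegree := totalDegree_pow _ _
      _ ≤ 2 * k := Nat.mul_le_mul_left _ (hdeg i)
      _ ≤ d := le_max_right _ _
  have hfd : f.totalDegree ≤ d := by
    refine (totalDegree_sub _ _).trans (max_le (hl.trans ?_) hσd)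
    exact le_max_left _ _
  have hC : Cert I E ((E - M₀) * d + D) f := (hcert f hfd hmem).raise hfd hM₀E
  obtain ⟨τ, hτ, hmemI⟩ := hC
  -- the `ε` argument
  have key : ∀ ε : ℝ, 0 < ε → 0 ≤ eval p l + ε := by
    intro ε hε
    obtain ⟨K, hK, hS⟩ := chain M₀ f d hfd ε hε
    -- assemble the sos certificate for `l + C ε` modulo `I`
    have hsos1 : SosB J (∑ i, g i ^ 2) :=
      SosB.mono (by omega : k ≤ J) ⟨r, g, hdeg, rfl⟩
    have hsos2 : SosB J (C ε + f + K • f ^ (2 * 2 ^ M₀)) := by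
      refine hS.mono ?_
      calc 2 ^ M₀ * d = E * d := by rw [hE]
        _ ≤ J := by omega
    have hsos3 : SosB J (K • τ) := by
      refine (hτ.smul hK.le).mono ?_
      have : (E - M₀) * d ≤ E * d := Nat.mul_le_mul_right _ (by omega)
      omega
    obtain ⟨r', g', hdeg', hEqsum⟩ := (hsos1.add hsos2).add hsos3
    have hKsos : IsKSos (I : Set MvP) J (l + C ε) := by
      refine ⟨r', g', hdeg', ?_⟩
      rw [← hEqsum]
      have hIdent : l + C ε - ((∑ i, g i ^ 2) + (C ε + f + K • f ^ (2 * 2 ^ M₀)) + K • τ)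
          = -(K • (f ^ (2 * E) + τ)) := by
        rw [hf, hE]
        rw [smul_eq_C_mul, smul_eq_C_mul, smul_eq_C_mul]
        ring
      rw [hIdent]
      refine neg_mem ?_
      rw [smul_eq_C_mul]
      exact Ideal.mul_mem_left _ _ hmemI
    have h2 := hp (l + C ε) ((totalDegree_add _ _).trans
      (max_le hl (by rw [totalDegree_C]; omega))) hKsos
    rw [map_add, eval_C] at h2
    exact h2
  by_contra hneg
  push_neg at hneg
  have := key (-(eval p l)/2) (by linarith)
  linarith

end ThetaAux

open ThetaAux in
/-- An ideal `I ⊆ ℝ[x₁,…,xₙ]` is TH-exact iff its real radical is TH-exact. -/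
theorem isThExact_iff_isThExact_realRadical {n : ℕ} (I : Ideal (MvPolynomial (Fin n) ℝ)) :
    IsThExact (I : Set (MvPolynomial (Fin n) ℝ)) ↔
      IsThExact (realRadical (I : Set (MvPolynomial (Fin n) ℝ))) := by
  constructor
  · rintro ⟨k, hk⟩
    refine ⟨k, ?_⟩
    rw [realVariety_realRadical]
    refine subset_antisymm ?_ ?_
    · exact (thetaBody_anti (subset_realRadical I) k).trans hk.subset
    · have := closure_convexHull_subset_thetaBody (realRadical (I : Set (MvPolynomial (Fin n) ℝ))) k
      rwa [realVariety_realRadical] at this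
  · rintro ⟨k, hk⟩
    obtain ⟨J, hJ⟩ := exists_thetaBody_subset I k
    refine ⟨J, ?_⟩
    rw [realVariety_realRadical] at hk
    refine subset_antisymm ?_ ?_
    · exact hJ.trans hk.subset
    · exact closure_convexHull_subset_thetaBody _ J
end

section
/- Let S ⊆ ℝⁿ be the vertex set of a (k+1)-level polytope. Then the vanishing ideal I(S) is TH_k-exact. -/
open MvPolynomial

/-- `F` is a facet of the polytope `P`: a nonempty exposed face of dimension `dim P - 1`. -/
def IsFacet {n : ℕ} (P F : Set (Fin n → ℝ)) : Prop :=
  IsExposed ℝ P F ∧ F.Nonempty ∧ F ≠ P ∧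
    Module.finrank ℝ (vectorSpan ℝ F) + 1 = Module.finrank ℝ (vectorSpan ℝ P)

/-- A finite point set `S` (thought of as the vertex set of the polytope `conv S`) is `m`-level
if for every facet `F` of `conv S` and every supporting hyperplane `{l = c}` of `conv S`
containing `F`, there are `m - 1` hyperplanes parallel to it such that every point of `S` lies
on one of the `m` hyperplanes. -/
def IsMLevel {n : ℕ} (m : ℕ) (S : Set (Fin n → ℝ)) : Prop :=
  ∀ F : Set (Fin n → ℝ), IsFacet (convexHull ℝ S) F →
    ∀ (l : (Fin n → ℝ) →ₗ[ℝ] ℝ) (c : ℝ), l ≠ 0 →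
      (∀ x ∈ convexHull ℝ S, l x ≤ c) → (∀ x ∈ F, l x = c) →
        ∃ cs : Fin (m - 1) → ℝ, ∀ v ∈ S, l v = c ∨ ∃ i, l v = cs i


private lemma support_le_one {n : ℕ} {l : MvPolynomial (Fin n) ℝ} (hl : l.totalDegree ≤ 1)
    {m : Fin n →₀ ℕ} (hm : m ∈ l.support) : m = 0 ∨ ∃ i, m = Finsupp.single i 1 := by
  by_cases h0 : m = 0
  · exact Or.inl h0
  right
  have hsum : (m.sum fun _ e => e) ≤ 1 := le_trans (MvPolynomial.le_totalDegree hm) hl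
  rw [Finsupp.sum] at hsum
  obtain ⟨i, hi⟩ : ∃ i, m i ≠ 0 := by
    by_contra h
    push_neg at h
    exact h0 (Finsupp.ext fun a => h a)
  have hisup : i ∈ m.support := Finsupp.mem_support_iff.mpr hi
  have hle : m i ≤ ∑ j ∈ m.support, m j :=
    Finset.single_le_sum (fun _ _ => Nat.zero_le _) hisup
  refine ⟨i, ?_⟩
  ext j
  rcases eq_or_ne j i with rfl | hj
  · simp only [Finsupp.single_eq_same]
    omega
  · rw [Finsupp.single_eq_of_ne' (Ne.symm hj)]
    by_contra hjz
    have hjsup : j ∈ m.support := Finsupp.mem_support_iff.mpr hjz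
    have hsub : ({i, j} : Finset (Fin n)) ⊆ m.support := by
      intro x hx
      simp only [Finset.mem_insert, Finset.mem_singleton] at hx
      rcases hx with rfl | rfl <;> assumption
    have h2 : m i + m j ≤ ∑ j ∈ m.support, m j := by
      have := Finset.sum_le_sum_of_subset (f := m) hsub
      rwa [Finset.sum_pair (Ne.symm hj)] at this
    omega

private lemma eval_affine_s14 {n : ℕ} {l : MvPolynomial (Fin n) ℝ} (hl : l.totalDegree ≤ 1)
    (x y : Fin n → ℝ) {a b : ℝ} (hab : a + b = 1) :
    eval (a • x + b • y) l = a * eval x l + b * eval y l := by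
  conv_lhs => rw [← l.support_sum_monomial_coeff]
  conv_rhs => rw [← l.support_sum_monomial_coeff]
  rw [map_sum, map_sum, map_sum, Finset.mul_sum, Finset.mul_sum, ← Finset.sum_add_distrib]
  refine Finset.sum_congr rfl fun m hm => ?_
  rcases support_le_one hl hm with rfl | ⟨i, rfl⟩
  · simp only [eval_monomial, Finsupp.prod_zero_index, mul_one, ← add_mul, hab, one_mul]
  · simp only [eval_monomial]
    rw [Finsupp.prod_single_index (by simp), Finsupp.prod_single_index (by simp),
      Finsupp.prod_single_index (by simp)]
    simp only [pow_one, Pi.add_apply, Pi.smul_apply, smul_eq_mul]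
    ring

private lemma convexHull_subset_thetaBody {n k : ℕ} (S : Set (Fin n → ℝ)) :
    convexHull ℝ S ⊆ thetaBody ((vanishingIdeal ℝ S : Ideal (MvPolynomial (Fin n) ℝ)) :
      Set (MvPolynomial (Fin n) ℝ)) k := by
  apply convexHull_min
  · rintro v hv l hdeg ⟨r, g, hgdeg, hmem⟩
    have h0 : eval v (l - ∑ i, g i ^ 2) = 0 :=
      (mem_vanishingIdeal_iff.mp hmem) v hv
    rw [map_sub, sub_eq_zero] at h0
    rw [h0, map_sum]
    apply Finset.sum_nonneg
    intro i _
    rw [map_pow]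
    positivity
  · intro x hx y hy a b ha hb hab l hdeg hsos
    have h1 := hx l hdeg hsos
    have h2 := hy l hdeg hsos
    show (0:ℝ) ≤ eval (a • x + b • y) l
    rw [eval_affine_s14 hdeg x y hab]
    have := mul_nonneg ha h1
    have := mul_nonneg hb h2
    linarith

private lemma realVariety_eq {n : ℕ} {S : Set (Fin n → ℝ)} (hfin : S.Finite) :
    realVariety ((vanishingIdeal ℝ S : Ideal (MvPolynomial (Fin n) ℝ)) :
      Set (MvPolynomial (Fin n) ℝ)) = S := by
  apply Set.Subset.antisymm
  · intro x hx
    by_contra hxS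
    classical
    set f : MvPolynomial (Fin n) ℝ :=
      ∏ s ∈ hfin.toFinset, (∑ i, (X i - C (s i)) ^ 2) with hf
    have hfI : f ∈ vanishingIdeal ℝ S := by
      rw [mem_vanishingIdeal_iff]
      intro v hv
      rw [hf, map_prod]
      apply Finset.prod_eq_zero (hfin.mem_toFinset.mpr hv)
      simp
    have h0 := hx f hfI
    rw [hf, map_prod] at h0
    obtain ⟨s, hs, hs0⟩ := Finset.prod_eq_zero_iff.mp h0
    rw [map_sum] at hs0
    have hterm : ∀ i ∈ Finset.univ, (0:ℝ) ≤ eval x ((X i - C (s i)) ^ 2) := by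
      intro i _
      rw [map_pow]
      positivity
    have hall := (Finset.sum_eq_zero_iff_of_nonneg hterm).mp hs0
    have hxs : x = s := by
      funext i
      have := hall i (Finset.mem_univ i)
      rw [map_pow, map_sub, eval_X, eval_C] at this
      have := pow_eq_zero_iff (n := 2) (by norm_num) |>.mp this
      linarith
    exact hxS (hxs ▸ hfin.mem_toFinset.mp hs)
  · intro v hv f hf
    exact mem_vanishingIdeal_iff.mp hf v hv
private noncomputable def levelSet {n : ℕ} (l : (Fin n → ℝ) →L[ℝ] ℝ) (c : ℝ) :
    AffineSubspace ℝ (Fin n → ℝ) where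
  carrier := {x | l x = c}
  smul_vsub_vadd_mem' := by
    intro t a b d ha hb hd
    simp only [Set.mem_setOf_eq, vsub_eq_sub, vadd_eq_add] at *
    simp [map_add, map_smul, map_sub, ha, hb, hd]

private lemma const_on_affineSpan {n : ℕ} {l : (Fin n → ℝ) →L[ℝ] ℝ} {c : ℝ}
    {T : Set (Fin n → ℝ)} (h : ∀ v ∈ T, l v = c) {x : Fin n → ℝ}
    (hx : x ∈ affineSpan ℝ T) : l x = c := by
  have hle : affineSpan ℝ T ≤ levelSet l c := affineSpan_le.mpr h
  exact hle hx

private lemma touch_finrank_lt {n : ℕ} {S : Set (Fin n → ℝ)} {p : Fin n → ℝ}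
    (hp : p ∈ affineSpan ℝ S) {l : (Fin n → ℝ) →L[ℝ] ℝ} {c : ℝ}
    (hne : {v ∈ S | l v = c}.Nonempty) (hlt : c < l p) :
    Module.finrank ℝ (vectorSpan ℝ {v ∈ S | l v = c}) <
      Module.finrank ℝ (vectorSpan ℝ S) := by
  set T := {v ∈ S | l v = c} with hT
  have hTS : T ⊆ S := Set.sep_subset _ _
  have hle : vectorSpan ℝ T ≤ vectorSpan ℝ S := vectorSpan_mono ℝ hTS
  by_contra h
  push_neg at h
  have heq : vectorSpan ℝ T = vectorSpan ℝ S := Submodule.eq_of_le_of_finrank_le hle h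
  have hspan : affineSpan ℝ T = affineSpan ℝ S := by
    apply AffineSubspace.eq_of_direction_eq_of_nonempty_of_le
    · rw [direction_affineSpan, direction_affineSpan, heq]
    · exact (affineSpan_nonempty ℝ).mpr hne
    · exact affineSpan_mono ℝ hTS
  have : l p = c := const_on_affineSpan (fun v hv => hv.2) (hspan ▸ hp)
  linarith
set_option maxHeartbeats 1000000 in
private lemma tilt {n : ℕ} {S : Set (Fin n → ℝ)} (hS : S.Finite) {p : Fin n → ℝ}
    {l : (Fin n → ℝ) →L[ℝ] ℝ} {c : ℝ}
    (hub : ∀ v ∈ S, l v ≤ c) (hne : {v ∈ S | l v = c}.Nonempty) (hlt : c < l p)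
    (hdim : Module.finrank ℝ (vectorSpan ℝ {v ∈ S | l v = c}) + 1 <
      Module.finrank ℝ (vectorSpan ℝ S)) :
    ∃ (l' : (Fin n → ℝ) →L[ℝ] ℝ) (c' : ℝ), (∀ v ∈ S, l' v ≤ c') ∧
      {v ∈ S | l' v = c'}.Nonempty ∧ c' < l' p ∧
      Module.finrank ℝ (vectorSpan ℝ {v ∈ S | l v = c}) <
        Module.finrank ℝ (vectorSpan ℝ {v ∈ S | l' v = c'}) := by
  classical
  set T := {v ∈ S | l v = c} with hT
  obtain ⟨a₀, ha₀S, ha₀c⟩ := hne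
  have ha₀T : a₀ ∈ T := ⟨ha₀S, ha₀c⟩
  set A' := affineSpan ℝ (insert p T) with hA'
  set W := A'.direction with hW
  have ha₀A : a₀ ∈ A' := subset_affineSpan ℝ _ (Set.mem_insert_of_mem _ ha₀T)
  have hpA : p ∈ A' := subset_affineSpan ℝ _ (Set.mem_insert _ _)
  have hTA : T ⊆ (A' : Set (Fin n → ℝ)) :=
    fun v hv => subset_affineSpan ℝ _ (Set.mem_insert_of_mem _ hv)
  have hTW : vectorSpan ℝ T ≤ W := by
    rw [hW, ← direction_affineSpan ℝ T]
    exact AffineSubspace.direction_le (affineSpan_le.mpr hTA)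
  -- dimension bound for W
  have hWdim : Module.finrank ℝ W ≤ Module.finrank ℝ (vectorSpan ℝ T) + 1 := by
    have h1 : A' = affineSpan ℝ (insert p (affineSpan ℝ T : Set (Fin n → ℝ))) :=
      (affineSpan_insert_affineSpan ℝ p T).symm
    have ha₀span : a₀ ∈ affineSpan ℝ T := subset_affineSpan ℝ T ha₀T
    have h2 : W = Submodule.span ℝ {p -ᵥ a₀} ⊔ (affineSpan ℝ T).direction := by
      rw [hW, h1]
      exact AffineSubspace.direction_affineSpan_insert ha₀span
    rw [h2, direction_affineSpan]
    set U := Submodule.span ℝ ({p -ᵥ a₀} : Set (Fin n → ℝ)) with hU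
    have h3 : Module.finrank ℝ ↥(U ⊔ vectorSpan ℝ T) ≤
        Module.finrank ℝ U + Module.finrank ℝ (vectorSpan ℝ T) := by
      have := Submodule.finrank_sup_add_finrank_inf_eq U (vectorSpan ℝ T)
      omega
    have h4 : Module.finrank ℝ U ≤ 1 := by
      rcases eq_or_ne (p -ᵥ a₀) 0 with h | h
      · rw [hU, h, Submodule.span_zero_singleton]
        simp
      · rw [hU, finrank_span_singleton h]
    omega
  -- find a vertex outside A'
  obtain ⟨w, hwS, hwA⟩ : ∃ w ∈ S, w ∉ (A' : Set (Fin n → ℝ)) := by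
    by_contra h
    push_neg at h
    have h1 : vectorSpan ℝ S ≤ W := by
      rw [hW, ← direction_affineSpan ℝ S]
      exact AffineSubspace.direction_le (affineSpan_le.mpr h)
    have h2 : Module.finrank ℝ (vectorSpan ℝ S) ≤ Module.finrank ℝ W :=
      Submodule.finrank_mono h1
    omega
  have hwv : w -ᵥ a₀ ∉ W := fun h =>
    hwA (by simpa using AffineSubspace.vadd_mem_of_mem_direction h ha₀A)
  -- dual functional killing W
  obtain ⟨φ₀, hφ₀ne, hφ₀W⟩ := Submodule.exists_dual_map_eq_bot_of_notMem hwv inferInstance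
  have hkill₀ : ∀ z ∈ W, φ₀ z = 0 := by
    intro z hz
    have : φ₀ z ∈ W.map φ₀ := Submodule.mem_map_of_mem hz
    rw [hφ₀W] at this
    simpa using this
  obtain ⟨ψ, hψpos, hψW'⟩ : ∃ ψ : Module.Dual ℝ (Fin n → ℝ),
      0 < ψ (w -ᵥ a₀) ∧ ∀ z ∈ W, ψ z = 0 := by
    rcases hφ₀ne.lt_or_gt with h | h
    · exact ⟨-φ₀, by simpa using h, fun z hz => by simp [hkill₀ z hz]⟩
    · exact ⟨φ₀, h, hkill₀⟩
  have hψw : 0 < ψ w - ψ a₀ := by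
    have h2 : ψ (w -ᵥ a₀) = ψ w - ψ a₀ := by rw [vsub_eq_sub, map_sub]
    linarith [hψpos, h2 ▸ hψpos]
  have hψT : ∀ v ∈ T, ψ v = ψ a₀ := by
    intro v hv
    have h1 : v -ᵥ a₀ ∈ vectorSpan ℝ T := vsub_mem_vectorSpan ℝ hv ha₀T
    have h2 : ψ (v - a₀) = 0 := hψW' _ (hTW h1)
    rw [map_sub] at h2
    linarith
  have hψp : ψ p = ψ a₀ := by
    have h1 : p -ᵥ a₀ ∈ W := AffineSubspace.vsub_mem_direction hpA ha₀A
    have h2 : ψ (p - a₀) = 0 := hψW' _ h1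
    rw [map_sub] at h2
    linarith
  -- the set of vertices strictly on the positive side
  set tset : Finset (Fin n → ℝ) := hS.toFinset.filter (fun v => ψ a₀ < ψ v) with htset
  have hwt : w ∈ tset := by
    rw [htset, Finset.mem_filter]
    exact ⟨hS.mem_toFinset.mpr hwS, by linarith⟩
  have htlt : ∀ v ∈ tset, l v < c := by
    intro v hv
    rw [htset, Finset.mem_filter] at hv
    obtain ⟨hvS, hvψ⟩ := hv
    have hvS' : v ∈ S := hS.mem_toFinset.mp hvS
    rcases lt_or_eq_of_le (hub v hvS') with h | h
    · exact h
    · exfalso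
      have : ψ v = ψ a₀ := hψT v ⟨hvS', h⟩
      linarith
  obtain ⟨vs, hvst, hvsmin⟩ := tset.exists_min_image
    (fun v => (c - l v) / (ψ v - ψ a₀)) ⟨w, hwt⟩
  have hvsS : vs ∈ S := hS.mem_toFinset.mp (Finset.mem_filter.mp hvst).1
  have hvsψ : ψ a₀ < ψ vs := (Finset.mem_filter.mp hvst).2
  set t : ℝ := (c - l vs) / (ψ vs - ψ a₀) with ht
  have htpos : 0 < t := div_pos (by have := htlt vs hvst; linarith) (by linarith)
  set l' : (Fin n → ℝ) →L[ℝ] ℝ :=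
    LinearMap.toContinuousLinearMap ((l : (Fin n → ℝ) →ₗ[ℝ] ℝ) + t • ψ) with hl'
  have hl'e : ∀ z, l' z = l z + t * ψ z := by
    intro z
    rw [hl', LinearMap.coe_toContinuousLinearMap']
    simp [smul_eq_mul]
  have hts : t * (ψ vs - ψ a₀) = c - l vs := by
    rw [ht]
    exact div_mul_cancel₀ _ (ne_of_gt (by linarith))
  refine ⟨l', c + t * ψ a₀, ?_, ⟨vs, hvsS, ?_⟩, ?_, ?_⟩
  · -- upper bound
    intro v hv
    rw [hl'e]
    rcases le_or_gt (ψ v) (ψ a₀) with h | h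
    · have := hub v hv
      nlinarith
    · have hvt : v ∈ tset := Finset.mem_filter.mpr ⟨hS.mem_toFinset.mpr hv, h⟩
      have hmin := hvsmin v hvt
      have h2 : t * (ψ v - ψ a₀) ≤ c - l v :=
        (le_div_iff₀ (show (0:ℝ) < ψ v - ψ a₀ by linarith)).mp hmin
      nlinarith
  · -- attained at vs
    rw [hl'e]
    linarith
  · -- strict at p
    rw [hl'e, hψp]
    linarith
  · -- dimension increases
    set T' := {v ∈ S | l' v = c + t * ψ a₀} with hT'
    have hTT' : T ⊆ T' := by
      intro v hv
      refine ⟨hv.1, ?_⟩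
      rw [hl'e, hv.2, hψT v hv]
    have hvsT' : vs ∈ T' := by
      refine ⟨hvsS, ?_⟩
      rw [hl'e]
      linarith
    have ha₀T' : a₀ ∈ T' := hTT' ha₀T
    have hltsub : vectorSpan ℝ T < vectorSpan ℝ T' := by
      rw [lt_iff_le_and_ne]
      constructor
      · exact vectorSpan_mono ℝ hTT'
      · intro heq
        have h1 : vs -ᵥ a₀ ∈ vectorSpan ℝ T' := vsub_mem_vectorSpan ℝ hvsT' ha₀T'
        rw [← heq] at h1
        have h2 : ψ (vs - a₀) = 0 := hψW' _ (hTW h1)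
        rw [map_sub] at h2
        linarith
    exact Submodule.finrank_lt_finrank_of_lt hltsub
private lemma core {n : ℕ} {S : Set (Fin n → ℝ)} (hS : S.Finite) {p : Fin n → ℝ}
    (hp : p ∈ affineSpan ℝ S) :
    ∀ (m : ℕ) (l : (Fin n → ℝ) →L[ℝ] ℝ) (c : ℝ), (∀ v ∈ S, l v ≤ c) →
      {v ∈ S | l v = c}.Nonempty → c < l p →
      Module.finrank ℝ (vectorSpan ℝ S) ≤
        Module.finrank ℝ (vectorSpan ℝ {v ∈ S | l v = c}) + 1 + m →
      ∃ (l' : (Fin n → ℝ) →L[ℝ] ℝ) (c' : ℝ), (∀ v ∈ S, l' v ≤ c') ∧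
        {v ∈ S | l' v = c'}.Nonempty ∧ c' < l' p ∧
        Module.finrank ℝ (vectorSpan ℝ {v ∈ S | l' v = c'}) + 1 =
          Module.finrank ℝ (vectorSpan ℝ S) := by
  intro m
  induction m with
  | zero =>
    intro l c hub hne hlt hd
    have h1 := touch_finrank_lt hp hne hlt
    exact ⟨l, c, hub, hne, hlt, by omega⟩
  | succ m ih =>
    intro l c hub hne hlt hd
    have h1 := touch_finrank_lt hp hne hlt
    by_cases hcase : Module.finrank ℝ (vectorSpan ℝ {v ∈ S | l v = c}) + 1 =
        Module.finrank ℝ (vectorSpan ℝ S)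
    · exact ⟨l, c, hub, hne, hlt, hcase⟩
    · obtain ⟨l', c', h1', h2', h3', h4'⟩ := tilt hS hub hne hlt (by omega)
      exact ih l' c' h1' h2' h3' (by omega)

private lemma le_on_convexHull {n : ℕ} {S : Set (Fin n → ℝ)}
    {l : (Fin n → ℝ) →L[ℝ] ℝ} {c : ℝ} (hub : ∀ v ∈ S, l v ≤ c) :
    ∀ x ∈ convexHull ℝ S, l x ≤ c := by
  intro x hx
  have hconv : Convex ℝ {x : Fin n → ℝ | l x ≤ c} :=
    convex_halfSpace_le ⟨fun a b => map_add l a b, fun t a => map_smul l t a⟩ c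
  exact convexHull_min hub hconv hx

private lemma vectorSpan_convexHull_eq {n : ℕ} (s : Set (Fin n → ℝ)) :
    vectorSpan ℝ (convexHull ℝ s) = vectorSpan ℝ s := by
  rw [← direction_affineSpan ℝ (convexHull ℝ s), affineSpan_convexHull,
    direction_affineSpan]

private lemma face_eq_hull {n : ℕ} {S : Set (Fin n → ℝ)}
    {l : (Fin n → ℝ) →L[ℝ] ℝ} {c : ℝ} (hub : ∀ v ∈ S, l v ≤ c) :
    {x ∈ convexHull ℝ S | l x = c} = convexHull ℝ {v ∈ S | l v = c} := by
  classical
  apply Set.Subset.antisymm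
  · rintro x ⟨hx, hxc⟩
    rw [convexHull_eq] at hx
    obtain ⟨ι, tf, w, z, hw0, hw1, hz, hcm⟩ := hx
    have hxz : x = ∑ i ∈ tf, w i • z i := by
      rw [← hcm, Finset.centerMass_eq_of_sum_1 _ _ hw1]
    have hlx : l x = ∑ i ∈ tf, w i * l (z i) := by
      rw [hxz, map_sum]
      exact Finset.sum_congr rfl fun i _ => by rw [map_smul, smul_eq_mul]
    have hsum0 : ∑ i ∈ tf, w i * (c - l (z i)) = 0 := by
      have h1 : ∑ i ∈ tf, w i * c = c := by
        rw [← Finset.sum_mul, hw1, one_mul]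
      have h2 : ∑ i ∈ tf, w i * (c - l (z i)) =
          (∑ i ∈ tf, w i * c) - ∑ i ∈ tf, w i * l (z i) := by
        rw [← Finset.sum_sub_distrib]
        exact Finset.sum_congr rfl fun i _ => by ring
      rw [h2, h1, ← hlx, hxc, sub_self]
    have hzero : ∀ i ∈ tf, w i * (c - l (z i)) = 0 :=
      (Finset.sum_eq_zero_iff_of_nonneg fun i hi =>
        mul_nonneg (hw0 i hi) (sub_nonneg.mpr (hub _ (hz i hi)))).mp hsum0
    set tf' := tf.filter (fun i => w i ≠ 0) with htf'
    have hcm' : tf'.centerMass w z = x := by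
      rw [htf', Finset.centerMass_filter_ne_zero, hcm]
    rw [← hcm']
    apply Finset.centerMass_mem_convexHull
    · intro i hi
      exact hw0 i (Finset.mem_filter.mp hi).1
    · rw [htf', Finset.sum_filter_ne_zero, hw1]
      norm_num
    · intro i hi
      obtain ⟨hit, hwne⟩ := Finset.mem_filter.mp hi
      refine ⟨hz i hit, ?_⟩
      rcases mul_eq_zero.mp (hzero i hit) with h | h
      · exact absurd h hwne
      · linarith
  · intro x hx
    have h1 : x ∈ convexHull ℝ S := convexHull_mono (Set.sep_subset _ _) hx
    have h2 : convexHull ℝ {v ∈ S | l v = c} ⊆ {x : Fin n → ℝ | l x = c} :=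
      convexHull_min (fun v hv => hv.2)
        (convex_hyperplane ⟨fun a b => map_add l a b, fun t a => map_smul l t a⟩ c)
    exact ⟨h1, h2 hx⟩

private lemma isExposed_face {n : ℕ} {S : Set (Fin n → ℝ)}
    {l : (Fin n → ℝ) →L[ℝ] ℝ} {c : ℝ} (hub : ∀ v ∈ S, l v ≤ c)
    (hne : {v ∈ S | l v = c}.Nonempty) :
    IsExposed ℝ (convexHull ℝ S) {x ∈ convexHull ℝ S | l x = c} := by
  intro _
  refine ⟨l, ?_⟩
  obtain ⟨v₀, hv₀S, hv₀⟩ := hne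
  have hv₀C : v₀ ∈ convexHull ℝ S := subset_convexHull ℝ S hv₀S
  ext x
  constructor
  · rintro ⟨hx, hxc⟩
    exact ⟨hx, fun y hy => by rw [hxc]; exact le_on_convexHull hub y hy⟩
  · rintro ⟨hx, hmax⟩
    refine ⟨hx, le_antisymm (le_on_convexHull hub x hx) ?_⟩
    have := hmax v₀ hv₀C
    rw [hv₀] at this
    exact this
private lemma exists_linear_poly {n : ℕ} (l : (Fin n → ℝ) →L[ℝ] ℝ) :
    ∃ L : MvPolynomial (Fin n) ℝ, L.totalDegree ≤ 1 ∧ ∀ x, eval x L = l x := by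
  classical
  refine ⟨∑ i, C (l fun j => if i = j then 1 else 0) * X i, ?_, ?_⟩
  · refine (totalDegree_finset_sum _ _).trans (Finset.sup_le fun i _ => ?_)
    refine (totalDegree_mul _ _).trans ?_
    simp [totalDegree_C, totalDegree_X]
  · intro x
    rw [map_sum]
    have hr := LinearMap.pi_apply_eq_sum_univ (l : (Fin n → ℝ) →ₗ[ℝ] ℝ) x
    rw [ContinuousLinearMap.coe_coe] at hr
    rw [hr]
    refine Finset.sum_congr rfl fun i _ => ?_
    rw [map_mul, eval_C, eval_X, smul_eq_mul, mul_comm]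

private lemma totalDegree_sub_le' {n : ℕ} (a b : MvPolynomial (Fin n) ℝ) :
    (a - b).totalDegree ≤ max a.totalDegree b.totalDegree := by
  rw [sub_eq_add_neg]
  exact (totalDegree_add _ _).trans (by rw [totalDegree_neg])

private lemma sos_certificate {n k : ℕ} {S : Set (Fin n → ℝ)}
    (l : (Fin n → ℝ) →L[ℝ] ℝ) (c : ℝ) (hub : ∀ v ∈ S, l v ≤ c)
    (cs : Fin k → ℝ) (hcs : ∀ v ∈ S, l v = c ∨ ∃ i, l v = cs i) :
    ∃ h : MvPolynomial (Fin n) ℝ, h.totalDegree ≤ 1 ∧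
      IsKSos ((vanishingIdeal ℝ S : Ideal (MvPolynomial (Fin n) ℝ)) :
        Set (MvPolynomial (Fin n) ℝ)) k h ∧ ∀ x, eval x h = c - l x := by
  classical
  obtain ⟨L, hLdeg, hLeval⟩ := exists_linear_poly l
  set Efin : Finset ℝ := insert c (Finset.image cs Finset.univ) with hEfin
  set q : Polynomial ℝ :=
    Lagrange.interpolate Efin id (fun e => Real.sqrt (c - e)) with hq
  have hqdeg : q.natDegree ≤ k := by
    have h1 : q.degree < (Efin.card : WithBot ℕ) :=
      Lagrange.degree_interpolate_lt _ (Set.injOn_id _)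
    have h2 : Efin.card ≤ k + 1 := by
      refine (Finset.card_insert_le _ _).trans ?_
      have := Finset.card_image_le (s := (Finset.univ : Finset (Fin k))) (f := cs)
      simpa using Nat.add_le_add_right this 1
    by_cases hq0 : q = 0
    · simp [hq0]
    · have h3 : q.natDegree < Efin.card :=
        (Polynomial.natDegree_lt_iff_degree_lt hq0).mpr h1
      omega
  have hqnode : ∀ e ∈ Efin, q.eval e = Real.sqrt (c - e) := by
    intro e he
    exact Lagrange.eval_interpolate_at_node _ (Set.injOn_id _) he
  set g : MvPolynomial (Fin n) ℝ := Polynomial.eval₂ MvPolynomial.C L q with hg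
  have hgeval : ∀ x, eval x g = q.eval (l x) := by
    intro x
    rw [hg, Polynomial.hom_eval₂]
    have hcomp : (eval x).comp (MvPolynomial.C (σ := Fin n) (R := ℝ)) = RingHom.id ℝ := by
      ext r
      simp
    rw [hcomp, hLeval]
    rfl
  have hgdeg : g.totalDegree ≤ k := by
    rw [hg, Polynomial.eval₂_eq_sum_range]
    refine (totalDegree_finset_sum _ _).trans (Finset.sup_le fun i hi => ?_)
    refine (totalDegree_mul _ _).trans ?_
    have h1 : (L ^ i).totalDegree ≤ i * L.totalDegree := totalDegree_pow _ _
    have h2 : i * L.totalDegree ≤ i * 1 := Nat.mul_le_mul_left i hLdeg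
    have h3 : i ≤ q.natDegree := Nat.lt_succ_iff.mp (Finset.mem_range.mp hi)
    simp only [totalDegree_C, zero_add]
    omega
  refine ⟨C c - L, ?_, ⟨1, fun _ => g, fun _ => hgdeg, ?_⟩, ?_⟩
  · exact (totalDegree_sub_le' _ _).trans (by simp [totalDegree_C, hLdeg])
  · rw [SetLike.mem_coe, mem_vanishingIdeal_iff]
    intro v hv
    change eval v _ = 0
    have hsum : (∑ _i : Fin 1, g ^ 2) = g ^ 2 := by simp
    rw [hsum]
    have hvE : l v ∈ Efin := by
      rcases hcs v hv with h | ⟨i, h⟩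
      · rw [h, hEfin]
        exact Finset.mem_insert_self _ _
      · rw [h, hEfin]
        exact Finset.mem_insert_of_mem (Finset.mem_image_of_mem cs (Finset.mem_univ i))
    have h0 : 0 ≤ c - l v := sub_nonneg.mpr (hub v hv)
    rw [map_sub, map_sub, map_pow, eval_C, hLeval, hgeval, hqnode _ hvE,
      Real.sq_sqrt h0]
    ring
  · intro x
    rw [map_sub, eval_C, hLeval]

/-- If `S ⊆ ℝⁿ` is the vertex set of a `(k+1)`-level polytope, then the
vanishing ideal `I(S)` is `TH_k`-exact. -/
theorem thExact_of_level_polytope {n : ℕ} (k : ℕ) (S : Set (Fin n → ℝ)) (hfin : S.Finite)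
    (hvert : S = Set.extremePoints ℝ (convexHull ℝ S))
    (hlevel : IsMLevel (k + 1) S) :
    thetaBody ((vanishingIdeal ℝ S : Ideal (MvPolynomial (Fin n) ℝ)) :
        Set (MvPolynomial (Fin n) ℝ)) k =
      closure (convexHull ℝ (realVariety ((vanishingIdeal ℝ S :
        Ideal (MvPolynomial (Fin n) ℝ)) : Set (MvPolynomial (Fin n) ℝ)))) := by
  classical
  rw [realVariety_eq hfin]
  have hclosed : IsClosed (convexHull ℝ S) := (hfin.isCompact_convexHull ℝ).isClosed
  rw [hclosed.closure_eq]
  apply Set.Subset.antisymm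
  · intro p hp
    by_contra hpc
    rcases Set.eq_empty_or_nonempty S with rfl | hSne
    · have h1 : (0:ℝ) ≤ eval p (C (-1) : MvPolynomial (Fin n) ℝ) := by
        refine hp _ (by simp) ?_
        refine ⟨0, fun i => i.elim0, fun i => i.elim0, ?_⟩
        simp [vanishingIdeal_empty]
      rw [eval_C] at h1
      linarith
    by_cases hps : p ∈ affineSpan ℝ S
    · -- main case: find a violated facet inequality
      obtain ⟨f, u, hfu, hup⟩ := geometric_hahn_banach_closed_point
        (convex_convexHull ℝ S) hclosed hpc
      obtain ⟨v₀, hv₀S, hv₀max⟩ := hfin.toFinset.exists_max_image f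
        (by rwa [Set.Finite.toFinset_nonempty])
      have hub₀ : ∀ v ∈ S, f v ≤ f v₀ := fun v hv =>
        hv₀max v (hfin.mem_toFinset.mpr hv)
      have hne₀ : {v ∈ S | f v = f v₀}.Nonempty :=
        ⟨v₀, hfin.mem_toFinset.mp hv₀S, rfl⟩
      have hlt₀ : f v₀ < f p :=
        lt_trans (hfu v₀ (subset_convexHull ℝ S (hfin.mem_toFinset.mp hv₀S))) hup
      obtain ⟨l, c, hub, hne, hlt, hdim⟩ := core hfin hps
        (Module.finrank ℝ (vectorSpan ℝ S)) f (f v₀) hub₀ hne₀ hlt₀ (by omega)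
      set F := {x ∈ convexHull ℝ S | l x = c} with hF
      have hubC : ∀ x ∈ convexHull ℝ S, l x ≤ c := le_on_convexHull hub
      obtain ⟨w₀, hw₀S, hw₀c⟩ := hne
      have hFacet : IsFacet (convexHull ℝ S) F := by
        refine ⟨isExposed_face hub ⟨w₀, hw₀S, hw₀c⟩,
          ⟨w₀, subset_convexHull ℝ S hw₀S, hw₀c⟩, ?_, ?_⟩
        · intro hFeq
          have hall : ∀ v ∈ S, l v = c := fun v hv =>
            (hFeq ▸ (subset_convexHull ℝ S hv : v ∈ convexHull ℝ S) :
              v ∈ F).2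
          have : l p = c := const_on_affineSpan hall hps
          linarith
        · rw [hF, face_eq_hull hub, vectorSpan_convexHull_eq,
            vectorSpan_convexHull_eq]
          exact hdim
      have hl0 : (l : (Fin n → ℝ) →ₗ[ℝ] ℝ) ≠ 0 := by
        intro h0
        have h1 : l p = 0 := by
          have := DFunLike.congr_fun h0 p
          simpa using this
        have h2 : l w₀ = 0 := by
          have := DFunLike.congr_fun h0 w₀
          simpa using this
        rw [h2] at hw₀c
        rw [h1] at hlt
        linarith
      obtain ⟨cs, hcs⟩ := hlevel F hFacet (l : (Fin n → ℝ) →ₗ[ℝ] ℝ) c hl0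
        (by simpa using hubC) (fun x hx => hx.2)
      have hcs' : ∀ v ∈ S, l v = c ∨ ∃ i : Fin k, l v = cs i := by
        intro v hv
        rcases hcs v hv with h | ⟨i, h⟩
        · left; simpa using h
        · right; exact ⟨i, by simpa using h⟩
      obtain ⟨h, hhdeg, hhsos, hheval⟩ := sos_certificate l c hub cs hcs'
      have h0 := hp h hhdeg hhsos
      rw [hheval p] at h0
      linarith
    · -- p outside the affine span
      have hclosedA : IsClosed (affineSpan ℝ S : Set (Fin n → ℝ)) :=
        (affineSpan ℝ S).closed_of_finiteDimensional
      obtain ⟨f, u, hfu, hup⟩ := geometric_hahn_banach_closed_point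
        ((affineSpan ℝ S).convex) hclosedA hps
      obtain ⟨a₀, ha₀⟩ := hSne
      have ha₀A : a₀ ∈ affineSpan ℝ S := subset_affineSpan ℝ S ha₀
      have hconst : ∀ v ∈ S, f v = f a₀ := by
        intro v hv
        by_contra hvne
        set d : ℝ := f v - f a₀ with hd
        have hd0 : d ≠ 0 := sub_ne_zero.mpr hvne
        set t₀ : ℝ := (u - f a₀ + 1) / d with ht₀
        have hy : t₀ • (v -ᵥ a₀) +ᵥ a₀ ∈ affineSpan ℝ S :=
          AffineSubspace.smul_vsub_vadd_mem _ t₀ (subset_affineSpan ℝ S hv) ha₀A ha₀A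
        have hfy : f (t₀ • (v -ᵥ a₀) +ᵥ a₀) = t₀ * d + f a₀ := by
          rw [vsub_eq_sub, vadd_eq_add, map_add, map_smul, map_sub, smul_eq_mul, hd]
        have h1 := hfu _ hy
        rw [hfy, ht₀, div_mul_cancel₀ _ hd0] at h1
        linarith
      obtain ⟨L, hLdeg, hLeval⟩ := exists_linear_poly f
      set h : MvPolynomial (Fin n) ℝ := C (f a₀) - L with hh
      have hhdeg : h.totalDegree ≤ 1 :=
        (totalDegree_sub_le' _ _).trans (by simp [totalDegree_C, hLdeg])
      have hhI : h ∈ vanishingIdeal ℝ S := by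
        rw [mem_vanishingIdeal_iff]
        intro v hv
        change eval v h = 0
        rw [hh, map_sub, eval_C, hLeval, hconst v hv, sub_self]
      have hsos : IsKSos ((vanishingIdeal ℝ S : Ideal (MvPolynomial (Fin n) ℝ)) :
          Set (MvPolynomial (Fin n) ℝ)) k h := by
        refine ⟨0, fun i => i.elim0, fun i => i.elim0, ?_⟩
        simpa using hhI
      have h0 := hp h hhdeg hsos
      rw [hh, map_sub, eval_C, hLeval] at h0
      have h2 : f a₀ < u := hfu a₀ ha₀A
      linarith
  · exact convexHull_subset_thetaBody S
end
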